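/- arXiv:1904.00964 — 5 statements merged into one kernel-verified Lean document; each statement's English description precedes it below -/
import Mathlib

section
/- If G is a GP4-graph, then the semipaired domination number of G equals two-fifths of the number of vertices of G; that is, γ_pr2(G) = (2/5)·|V(G)| = 2·n_H, where n_H is the number of vertices of the underlying graph H. -/
/-- `D` is a dominating set of `G`. -/
def IsDomSet {V : Type*} (G : SimpleGraph V) (D : Finset V) : Prop :=
  ∀ v, v ∉ D → ∃ u ∈ D, G.Adj u v

/-- `D` is a semipaired dominating set of `G`: a dominating set that can be partitioned
into 2-element subsets (given by a fixed-point-free involution on `D`) such that the two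
vertices in each pair are at distance at most 2 (adjacent or having a common neighbor). -/
def IsSemiPD {V : Type*} (G : SimpleGraph V) (D : Finset V) : Prop :=
  IsDomSet G D ∧ ∃ f : V → V, ∀ v ∈ D, f v ∈ D ∧ f v ≠ v ∧ f (f v) = v ∧
    (G.Adj v (f v) ∨ ∃ w, G.Adj v w ∧ G.Adj (f v) w)

/-- The semipaired domination number `γ_pr2(G)`. -/
noncomputable def gammaPr2 {V : Type*} (G : SimpleGraph V) : ℕ :=
  sInf {k | ∃ D : Finset V, IsSemiPD G D ∧ D.card = k}

/-- The defining relation of the GP4-graph built from `H`: vertices are `Sum.inl v` for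
the original vertices `v` of `H` and `Sum.inr (v, k)` (`k = 0,1,2,3`, corresponding to
`w_v, x_v, y_v, z_v`) for the added path of length 3 attached at `v`. -/
def gp4Rel {α : Type*} (H : SimpleGraph α) : α ⊕ α × Fin 4 → α ⊕ α × Fin 4 → Prop
  | Sum.inl u, Sum.inl v => H.Adj u v
  | Sum.inl u, Sum.inr (v, k) => u = v ∧ k = 0
  | Sum.inr (u, k), Sum.inr (v, l) => u = v ∧ (l : ℕ) = (k : ℕ) + 1
  | _, _ => False

/-- The GP4-graph obtained from `H` by attaching a path of length 3 to every vertex. -/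
def gp4 {α : Type*} (H : SimpleGraph α) : SimpleGraph (α ⊕ α × Fin 4) :=
  SimpleGraph.fromRel (gp4Rel H)

lemma gp4_adj_succ {α : Type*} (H : SimpleGraph α) (v : α) (k l : Fin 4)
    (h : (l : ℕ) = (k : ℕ) + 1) : (gp4 H).Adj (Sum.inr (v, k)) (Sum.inr (v, l)) := by
  have : k ≠ l := by intro he; rw [he] at h; omega
  exact ⟨by simpa using this, Or.inl ⟨rfl, h⟩⟩

lemma gp4_adj_inl {α : Type*} (H : SimpleGraph α) (v : α) :
    (gp4 H).Adj (Sum.inr (v, 0)) (Sum.inl v) := by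
  exact ⟨by simp, Or.inr ⟨rfl, rfl⟩⟩

lemma gp4_nbr_w {α : Type*} (H : SimpleGraph α) (v : α) (u : α ⊕ α × Fin 4)
    (h : (gp4 H).Adj u (Sum.inr (v, 0))) : u = Sum.inl v ∨ u = Sum.inr (v, 1) := by
  rcases u with a | ⟨a, l⟩
  · simp_all [gp4, SimpleGraph.fromRel_adj, gp4Rel]
  · simp only [gp4, SimpleGraph.fromRel_adj, gp4Rel] at h
    obtain ⟨_, h | h⟩ := h
    · omega
    · obtain ⟨rfl, h⟩ := h
      right
      have := l.isLt
      congr 2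
      omega

lemma gp4_nbr_z {α : Type*} (H : SimpleGraph α) (v : α) (u : α ⊕ α × Fin 4)
    (h : (gp4 H).Adj u (Sum.inr (v, 3))) : u = Sum.inr (v, 2) := by
  rcases u with a | ⟨a, l⟩
  · simp_all [gp4, SimpleGraph.fromRel_adj, gp4Rel]
  · simp only [gp4, SimpleGraph.fromRel_adj, gp4Rel] at h
    obtain ⟨_, h | h⟩ := h
    · obtain ⟨rfl, h⟩ := h
      have := l.isLt
      have hl : l = 2 := by omega
      rw [hl]
    · have := l.isLt
      omega

/-- If `G` is a GP4-graph built from a connected graph `H`, then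
`γ_pr2(G) = 2·n_H = (2/5)·|V(G)|`. -/
theorem gammaPr2_gp4 {α : Type*} [Fintype α] [DecidableEq α]
    (H : SimpleGraph α) (hconn : H.Connected) :
    gammaPr2 (gp4 H) = 2 * Fintype.card α ∧
    5 * gammaPr2 (gp4 H) = 2 * Fintype.card (α ⊕ α × Fin 4) := by
  classical
  -- The good semi-PD set: {w_v, y_v} for all v
  set D : Finset (α ⊕ α × Fin 4) :=
    Finset.image Sum.inr (Finset.univ ×ˢ ({0, 2} : Finset (Fin 4))) with hD
  have hmem : ∀ x, x ∈ D ↔ ∃ v : α, x = Sum.inr (v, 0) ∨ x = Sum.inr (v, 2) := by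
    intro x
    simp only [hD, Finset.mem_image, Finset.mem_product, Finset.mem_univ, true_and,
      Finset.mem_insert, Finset.mem_singleton]
    constructor
    · rintro ⟨⟨a, b⟩, hb | hb, rfl⟩
      · obtain rfl : b = 0 := hb; exact ⟨a, Or.inl rfl⟩
      · obtain rfl : b = 2 := hb; exact ⟨a, Or.inr rfl⟩
    · rintro ⟨v, rfl | rfl⟩
      · exact ⟨(v, 0), Or.inl rfl, rfl⟩
      · exact ⟨(v, 2), Or.inr rfl, rfl⟩
  have hcard : D.card = 2 * Fintype.card α := by
    rw [hD, Finset.card_image_of_injective _ Sum.inr_injective, Finset.card_product]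
    simp [mul_comm]
  have hdom : IsDomSet (gp4 H) D := by
    intro x hx
    rcases x with v | ⟨v, k⟩
    · exact ⟨Sum.inr (v, 0), (hmem _).2 ⟨v, Or.inl rfl⟩, gp4_adj_inl H v⟩
    · fin_cases k
      · exact absurd ((hmem _).2 ⟨v, Or.inl rfl⟩) hx
      · exact ⟨Sum.inr (v, 0), (hmem _).2 ⟨v, Or.inl rfl⟩, gp4_adj_succ H v 0 1 rfl⟩
      · exact absurd ((hmem _).2 ⟨v, Or.inr rfl⟩) hx
      · exact ⟨Sum.inr (v, 2), (hmem _).2 ⟨v, Or.inr rfl⟩, gp4_adj_succ H v 2 3 rfl⟩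
  have hsemi : IsSemiPD (gp4 H) D := by
    refine ⟨hdom, fun x => match x with
      | Sum.inl v => Sum.inl v
      | Sum.inr (v, k) => Sum.inr (v, if k = 0 then 2 else if k = 2 then 0 else k), ?_⟩
    intro x hx
    obtain ⟨v, rfl | rfl⟩ := (hmem x).1 hx
    · refine ⟨(hmem _).2 ⟨v, Or.inr (by norm_num)⟩, by norm_num <;> decide,
        by norm_num <;> decide,
        Or.inr ⟨Sum.inr (v, 1), gp4_adj_succ H v 0 1 rfl, ?_⟩⟩
      simpa using ((gp4_adj_succ H v 1 2 rfl).symm)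
    · refine ⟨(hmem _).2 ⟨v, Or.inl (by norm_num)⟩, by norm_num <;> decide,
        by norm_num <;> decide,
        Or.inr ⟨Sum.inr (v, 1), (gp4_adj_succ H v 1 2 rfl).symm, ?_⟩⟩
      simpa using (gp4_adj_succ H v 0 1 rfl)
  have hDmem : 2 * Fintype.card α ∈
      {k | ∃ D : Finset (α ⊕ α × Fin 4), IsSemiPD (gp4 H) D ∧ D.card = k} :=
    ⟨D, hsemi, hcard⟩
  -- lower bound
  have hlow : ∀ k ∈ {k | ∃ D : Finset (α ⊕ α × Fin 4), IsSemiPD (gp4 H) D ∧ D.card = k},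
      2 * Fintype.card α ≤ k := by
    rintro k ⟨E, ⟨hEdom, _⟩, rfl⟩
    set g : α ⊕ α × Fin 4 → α × Fin 2 := fun x => match x with
      | Sum.inl v => (v, 0)
      | Sum.inr (v, k) => (v, if (k : ℕ) ≤ 1 then 0 else 1) with hg
    have hsurj : ∀ p : α × Fin 2, ∃ x ∈ E, g x = p := by
      rintro ⟨v, j⟩
      fin_cases j
      · by_cases h0 : Sum.inr (v, 0) ∈ E
        · exact ⟨_, h0, by simp [hg]⟩
        · obtain ⟨u, hu, hadj⟩ := hEdom _ h0
          rcases gp4_nbr_w H v u hadj with rfl | rfl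
          · exact ⟨_, hu, by simp [hg]⟩
          · exact ⟨_, hu, by simp [hg]⟩
      · by_cases h3 : Sum.inr (v, 3) ∈ E
        · exact ⟨_, h3, by simp [hg, show ((3 : Fin 4) : ℕ) = 3 from rfl]⟩
        · obtain ⟨u, hu, hadj⟩ := hEdom _ h3
          have he := gp4_nbr_z H v u hadj
          subst he
          exact ⟨_, hu, by simp [hg, show ((2 : Fin 4) : ℕ) = 2 from rfl]⟩
    have hsub : (Finset.univ : Finset (α × Fin 2)) ⊆ E.image g := by
      intro p _
      obtain ⟨x, hx, hgx⟩ := hsurj p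
      exact Finset.mem_image.2 ⟨x, hx, hgx⟩
    calc 2 * Fintype.card α = (Finset.univ : Finset (α × Fin 2)).card := by
          simp [Fintype.card_prod, mul_comm]
      _ ≤ (E.image g).card := Finset.card_le_card hsub
      _ ≤ E.card := Finset.card_image_le
  have hmain : gammaPr2 (gp4 H) = 2 * Fintype.card α :=
    le_antisymm (Nat.sInf_le hDmem) (le_csInf ⟨_, hDmem⟩ hlow)
  refine ⟨hmain, ?_⟩
  rw [hmain]
  simp [Fintype.card_sum, Fintype.card_prod]
  ring
end

section
/- Let G be a connected interval graph with interval model I_1,…,I_n (all endpoints pairwise distinct), vertices v_1,…,v_n indexed in left-end ordering, and for each i ∈ [n] let V_i = {v_1,…,v_i}. Then for every i ∈ [n], the induced subgraph G[V_i] is connected. -/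
/-- Let `G` be a connected interval graph with interval model `I_i = [a i, b i]`
(all endpoints pairwise distinct), vertices indexed in left-end ordering, and for
each `i` let `V_i = {v_1, …, v_i}`. Then the induced subgraph `G[V_i]` is connected. -/
theorem interval_induce_connected {n : ℕ} (a b : Fin n → ℝ) (G : SimpleGraph (Fin n))
    (hab : ∀ i, a i < b i)
    (hbinj : Function.Injective b)
    (habne : ∀ i j : Fin n, a i ≠ b j)
    (hmono : StrictMono a)
    (hadj : ∀ i j : Fin n, G.Adj i j ↔
      i ≠ j ∧ (Set.Icc (a i) (b i) ∩ Set.Icc (a j) (b j)).Nonempty)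
    (hconn : G.Connected) :
    ∀ i : Fin n, (G.induce {j : Fin n | j ≤ i}).Connected := by
  intro i
  have hn : 0 < n := i.pos
  set z0 : Fin n := ⟨0, hn⟩ with hz0
  have cross : ∀ u w k : Fin n, G.Adj u w → w < k → k ≤ u → G.Adj w k := by
    intro u w k huw hwk hku
    rw [hadj] at huw ⊢
    obtain ⟨_, x, hx1, hx2⟩ := huw
    refine ⟨hwk.ne, a k, ⟨(hmono hwk).le, ?_⟩, ⟨le_refl _, (hab k).le⟩⟩
    exact le_trans (hmono.monotone hku) (le_trans hx1.1 hx2.2)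
  have key : ∀ k : Fin n, z0 < k → ∃ w, w < k ∧ G.Adj w k := by
    intro k hk
    obtain ⟨p⟩ := hconn k z0
    have gen : ∀ u z (p : G.Walk u z), z < k → k ≤ u → ∃ w, w < k ∧ G.Adj w k := by
      intro u z p
      induction p with
      | nil => intro hz h; exact absurd (lt_of_le_of_lt h hz) (lt_irrefl _)
      | @cons u m _ h q ih =>
        intro hz hku
        by_cases hm : m < k
        · exact ⟨m, hm, cross u m k h hm hku⟩
        · exact ih hz (le_of_not_gt hm)
    exact gen k z0 p hk (le_refl _)
  have h0i : z0 ≤ i := by simp [Fin.le_def, z0]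
  rw [SimpleGraph.connected_iff]
  refine ⟨?_, ⟨⟨z0, h0i⟩⟩⟩
  have main : ∀ m : ℕ, ∀ v : {j : Fin n | j ≤ i}, v.1.val = m →
      (G.induce {j : Fin n | j ≤ i}).Reachable v ⟨z0, h0i⟩ := by
    intro m
    induction m using Nat.strong_induction_on with
    | _ m ih =>
      intro v hv
      rcases eq_or_lt_of_le (show z0 ≤ v.1 by simp [Fin.le_def, z0]) with h | h
      · exact by rw [show v = ⟨z0, h0i⟩ from Subtype.ext h.symm]
      · obtain ⟨w, hwlt, hadjw⟩ := key v.1 h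
        have hwle : w ∈ {j : Fin n | j ≤ i} := le_trans hwlt.le v.2
        have step : (G.induce {j : Fin n | j ≤ i}).Adj v ⟨w, hwle⟩ := by
          simpa using hadjw.symm
        have hwm : w.val < m := hv ▸ hwlt
        exact (step.reachable).trans (ih w.val hwm ⟨w, hwle⟩ rfl)
  intro u v
  exact (main _ u rfl).trans (main _ v rfl).symm
end

section
/- Let G be a connected interval graph with at least two vertices, with interval model having pairwise distinct endpoints and vertices v_1,…,v_n in left-end ordering; let G_i = G[{v_1,…,v_i}], and let F(v_i) denote the least-index neighbor of v_i (with F(v_1) = v_1). For every i ≥ 2, if F(v_i) = v_1, then {v_1, v_i} is a semipaired dominating set of G_i of minimum cardinality. -/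
/-- `D` is a semipaired dominating set of the subgraph of `G` induced by the vertex
set `S`: `D ⊆ S`, every vertex of `S` outside `D` has a neighbor in `D`, and `D` can
be partitioned into 2-element subsets (given by a fixed-point-free involution on `D`)
such that the two vertices in each pair are at distance at most 2 in `G[S]`
(adjacent, or having a common neighbor inside `S`). -/
def IsSemiPDOn {V : Type*} (G : SimpleGraph V) (S : Set V) (D : Finset V) : Prop :=
  (∀ v ∈ D, v ∈ S) ∧
  (∀ v ∈ S, v ∉ D → ∃ u ∈ D, G.Adj u v) ∧
  ∃ f : V → V, ∀ v ∈ D, f v ∈ D ∧ f v ≠ v ∧ f (f v) = v ∧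
    (G.Adj v (f v) ∨ ∃ w ∈ S, G.Adj v w ∧ G.Adj (f v) w)

/-- `D` is a minimum cardinality semipaired dominating set of `G[S]`. -/
def IsMinSemiPDOn {V : Type*} (G : SimpleGraph V) (S : Set V) (D : Finset V) : Prop :=
  IsSemiPDOn G S D ∧ ∀ D' : Finset V, IsSemiPDOn G S D' → D.card ≤ D'.card

/-- Let `G` be a connected interval graph with at least two vertices, with interval
model `I_i = [a i, b i]` having pairwise distinct endpoints, and vertices in left-end
ordering. Here `v0` is the first vertex (`v_1` in 1-indexed notation) and
`G_i = G[{x | x ≤ i}]`. For every `i ≥ 2` (i.e. `i ≠ v_1`), if `F(v_i) = v_1`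
(the least-index neighbor of `v_i` is `v_1`), then `{v_1, v_i}` is a semipaired
dominating set of `G_i` of minimum cardinality. -/
theorem interval_minSemiPD_first {n : ℕ} (hn : 2 ≤ n) (a b : Fin n → ℝ)
    (G : SimpleGraph (Fin n))
    (hab : ∀ i, a i < b i)
    (hbinj : Function.Injective b)
    (habne : ∀ i j : Fin n, a i ≠ b j)
    (hmono : StrictMono a)
    (hadj : ∀ i j : Fin n, G.Adj i j ↔
      i ≠ j ∧ (Set.Icc (a i) (b i) ∩ Set.Icc (a j) (b j)).Nonempty)
    (hconn : G.Connected)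
    (v0 i : Fin n) (hv0 : (v0 : ℕ) = 0) (hi : v0 < i)
    (hF : G.Adj v0 i ∧ ∀ x : Fin n, G.Adj x i → v0 ≤ x) :
    IsMinSemiPDOn G {x : Fin n | x ≤ i} {v0, i} := by
  have hne : v0 ≠ i := ne_of_lt hi
  obtain ⟨-, t, ⟨⟨ht1, ht2⟩, ht3, ht4⟩⟩ := (hadj v0 i).mp hF.1
  have hkey : a i ≤ b v0 := le_trans ht3 ht2
  constructor
  · refine ⟨?_, ?_, ?_⟩
    · intro v hv
      simp only [Finset.mem_insert, Finset.mem_singleton] at hv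
      rcases hv with rfl | rfl
      · exact le_of_lt hi
      · exact Set.mem_setOf.mpr le_rfl
    · intro x hx hxD
      simp only [Finset.mem_insert, Finset.mem_singleton, not_or] at hxD
      have hx0 : v0 < x := lt_of_le_of_ne (Fin.le_def.mpr (by omega)) (Ne.symm hxD.1)
      have hxi : x < i := lt_of_le_of_ne hx hxD.2
      refine ⟨v0, by simp, (hadj v0 x).mpr ⟨Ne.symm hxD.1, a x,
        ⟨⟨le_of_lt (hmono hx0), le_trans (le_of_lt (hmono hxi)) hkey⟩,
          ⟨le_refl _, le_of_lt (hab x)⟩⟩⟩⟩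
    · refine ⟨fun v => Equiv.swap v0 i v, ?_⟩
      intro v hv
      simp only [Finset.mem_insert, Finset.mem_singleton] at hv
      rcases hv with rfl | rfl
      · simp only [Equiv.swap_apply_left, Equiv.swap_apply_right]
        exact ⟨by simp, Ne.symm hne, trivial, Or.inl hF.1⟩
      · simp only [Equiv.swap_apply_left, Equiv.swap_apply_right]
        exact ⟨by simp, hne, trivial, Or.inl hF.1.symm⟩
  · intro D' hD'
    obtain ⟨hsub, hdom, f, hf⟩ := hD'
    have hDne : ∃ v, v ∈ D' := by
      by_cases h : v0 ∈ D'
      · exact ⟨v0, h⟩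
      · obtain ⟨u, hu, -⟩ := hdom v0 (le_of_lt hi) h
        exact ⟨u, hu⟩
    obtain ⟨v, hv⟩ := hDne
    obtain ⟨hfv, hfvne, -, -⟩ := hf v hv
    have h2 : 1 < D'.card := Finset.one_lt_card.mpr ⟨v, hv, f v, hfv, hfvne.symm⟩
    have hcard : ({v0, i} : Finset (Fin n)).card = 2 := by
      rw [Finset.card_insert_of_notMem (by simp [hne]), Finset.card_singleton]
    omega
end

section
/- Let G be a connected interval graph with at least two vertices, with interval model having pairwise distinct endpoints and vertices v_1,…,v_n in left-end ordering; let G_i = G[{v_1,…,v_i}], and let F(v_i) denote the least-index neighbor of v_i (with F(v_1) = v_1). For i > 1, if F(v_i) = v_j with j > 1 and F(v_j) = v_1, then {v_1, v_j} is a semipaired dominating set of G_i of minimum cardinality. -/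
/-- Let `G` be a connected interval graph with at least two vertices, with interval
model `I_i = [a i, b i]` having pairwise distinct endpoints, and vertices in left-end
ordering. Here `v0` is the first vertex (`v_1` in 1-indexed notation) and
`G_i = G[{x | x ≤ i}]`. For `i > 1`, if `F(v_i) = v_j` with `j > 1` and
`F(v_j) = v_1` (`F` denotes the least-index neighbor), then `{v_1, v_j}` is a
semipaired dominating set of `G_i` of minimum cardinality. -/
theorem interval_minSemiPD_second {n : ℕ} (hn : 2 ≤ n) (a b : Fin n → ℝ)
    (G : SimpleGraph (Fin n))
    (hab : ∀ i, a i < b i)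
    (hbinj : Function.Injective b)
    (habne : ∀ i j : Fin n, a i ≠ b j)
    (hmono : StrictMono a)
    (hadj : ∀ i j : Fin n, G.Adj i j ↔
      i ≠ j ∧ (Set.Icc (a i) (b i) ∩ Set.Icc (a j) (b j)).Nonempty)
    (hconn : G.Connected)
    (v0 i j : Fin n) (hv0 : (v0 : ℕ) = 0) (hi : v0 < i) (hj : v0 < j)
    (hFi : G.Adj j i ∧ ∀ x : Fin n, G.Adj x i → j ≤ x)
    (hFj : G.Adj v0 j ∧ ∀ x : Fin n, G.Adj x j → v0 ≤ x) :
    IsMinSemiPDOn G {x : Fin n | x ≤ i} {v0, j} := by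

  have hle : ∀ x : Fin n, v0 ≤ x := fun x => by
    rw [Fin.le_def, hv0]; exact Nat.zero_le _
  have adjlt : ∀ u w : Fin n, u < w → (G.Adj u w ↔ a w ≤ b u) := by
    intro u w huw
    rw [hadj]
    constructor
    · rintro ⟨-, t, ht⟩
      simp only [Set.mem_inter_iff, Set.mem_Icc] at ht
      exact le_trans ht.2.1 ht.1.2
    · intro h
      refine ⟨huw.ne, a w, ?_⟩
      simp only [Set.mem_inter_iff, Set.mem_Icc]
      exact ⟨⟨(hmono huw).le, h⟩, le_rfl, (hab w).le⟩
  have hji : j < i := by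
    obtain ⟨p⟩ := hconn.preconnected v0 i
    obtain ⟨d, -, hd1, hd2⟩ := p.exists_boundary_dart (S := {x : Fin n | x < i}) hi
      (by simp)
    simp only [Set.mem_setOf_eq, not_lt] at hd1 hd2
    have hadjd : G.Adj d.fst d.snd := d.adj
    have hadjfi : G.Adj d.fst i := by
      rcases eq_or_lt_of_le hd2 with heq | hlt
      · rwa [← heq] at hadjd
      · have h1 : a d.snd ≤ b d.fst := (adjlt _ _ (lt_trans hd1 hlt)).mp hadjd
        exact (adjlt _ _ hd1).mpr (le_trans (hmono hlt).le h1)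
    exact lt_of_le_of_lt (hFi.2 _ hadjfi) hd1
  have hv0j : v0 ≠ j := ne_of_lt hj
  constructor
  · refine ⟨?_, ?_, ?_⟩
    · intro v hv
      simp only [Finset.mem_insert, Finset.mem_singleton] at hv
      rcases hv with rfl | rfl
      · exact hi.le
      · exact hji.le
    · intro x hx hxD
      simp only [Finset.mem_insert, Finset.mem_singleton, not_or] at hxD
      by_cases hxj : x < j
      · refine ⟨v0, by simp, ?_⟩
        have hv0x : v0 < x := lt_of_le_of_ne (hle x) (Ne.symm hxD.1)
        have h1 : a j ≤ b v0 := (adjlt v0 j hj).mp hFj.1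
        exact (adjlt v0 x hv0x).mpr (le_trans (hmono hxj).le h1)
      · have hjx : j < x := lt_of_le_of_ne (not_lt.mp hxj) fun h => hxD.2 h.symm
        refine ⟨j, by simp, ?_⟩
        have hx' : x ≤ i := hx
        rcases eq_or_lt_of_le hx' with heq | hlt
        · rw [heq]; exact hFi.1
        · have h2 : a i ≤ b j := (adjlt j i hji).mp hFi.1
          exact (adjlt j x hjx).mpr (le_trans (hmono hlt).le h2)
    · refine ⟨Equiv.swap v0 j, ?_⟩
      intro v hv
      simp only [Finset.mem_insert, Finset.mem_singleton] at hv
      rcases hv with h | h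
      · subst h
        refine ⟨by simp, ?_, by simp, ?_⟩
        · rw [Equiv.swap_apply_left]; exact Ne.symm hv0j
        · rw [Equiv.swap_apply_left]; exact Or.inl hFj.1
      · subst h
        refine ⟨by simp, ?_, by simp, ?_⟩
        · rw [Equiv.swap_apply_right]; exact hv0j
        · rw [Equiv.swap_apply_right]; exact Or.inl hFj.1.symm
  · intro D' hD'
    obtain ⟨hsub, hdom, f, hf⟩ := hD'
    have hne : ∃ u, u ∈ D' := by
      by_cases h : v0 ∈ D'
      · exact ⟨v0, h⟩
      · obtain ⟨u, hu, -⟩ := hdom v0 hi.le h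
        exact ⟨u, hu⟩
    obtain ⟨u, hu⟩ := hne
    have h2 : 1 < D'.card :=
      Finset.one_lt_card.mpr ⟨u, hu, f u, (hf u hu).1, ((hf u hu).2.1).symm⟩
    have hcard : ({v0, j} : Finset (Fin n)).card = 2 := by
      rw [Finset.card_insert_of_notMem (by simpa using hv0j), Finset.card_singleton]
    omega
end

section
/- Let G be a connected interval graph with interval model having pairwise distinct endpoints and vertices v_1,…,v_n in left-end ordering; let G_i = G[{v_1,…,v_i}], let F(v_i) denote the least-index neighbor of v_i, and let L(v_i) = v_q where q = max{k < i : v_k v_i ∉ E} (L(v_i) = v_0 if no such k exists). Suppose r < k < j < i are indices with F(v_i) = v_j, F(v_j) = v_k, F(v_k) = v_r, and not every vertex v_l with k < l < j is adjacent to a vertex of {v_j, v_r}. Suppose t = max{l : k < l < j and v_l v_j ∉ E} exists and let F(v_t) = v_b. Then: (a) if L(v_b) = v_0, the set {v_j, v_b} is a minimum cardinality semipaired dominating set of G_i; (b) if L(v_b) = v_1, the set {v_1, v_2, v_j, v_b} is a minimum cardinality semipaired dominating set of G_i; (c) if L(v_b) = v_s with s ≥ 2, then for every minimum cardinality semipaired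 dominating set D_s of G_s, the set D_s ∪ {v_j, v_b} is a minimum cardinality semipaired dominating set of G_i; in particular γ_pr2(G_i) = γ_pr2(G_s) + 2. -/
/-- The semipaired domination number of the subgraph of `G` induced by `S`. -/
noncomputable def gammaPr2On {V : Type*} (G : SimpleGraph V) (S : Set V) : ℕ :=
  sInf {c | ∃ D : Finset V, IsSemiPDOn G S D ∧ D.card = c}

lemma aux_even_card_fpf {α : Type*} [DecidableEq α] (f : α → α) (D : Finset α)
    (hD : ∀ v ∈ D, f v ∈ D ∧ f v ≠ v ∧ f (f v) = v) : Even D.card := by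
  classical
  induction D using Finset.strongInduction with
  | _ D ih =>
    rcases D.eq_empty_or_nonempty with rfl | ⟨v, hv⟩
    · simp
    · obtain ⟨hfv, hne, hff⟩ := hD v hv
      set E := (D.erase v).erase (f v) with hE
      have hfv' : f v ∈ D.erase v := Finset.mem_erase.mpr ⟨hne, hfv⟩
      have h1 : (D.erase v).card = D.card - 1 := Finset.card_erase_of_mem hv
      have h2 : E.card = (D.erase v).card - 1 := Finset.card_erase_of_mem hfv'
      have h3 : 1 ≤ (D.erase v).card := Finset.card_pos.mpr ⟨f v, hfv'⟩
      have h4 : 1 ≤ D.card := Finset.card_pos.mpr ⟨v, hv⟩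
      have hsub : E ⊂ D := by
        refine Finset.ssubset_iff_of_subset ?_ |>.mpr ⟨v, hv, ?_⟩
        · intro x hx
          exact Finset.mem_of_mem_erase (Finset.mem_of_mem_erase hx)
        · intro hvE
          exact (Finset.mem_erase.mp (Finset.mem_of_mem_erase hvE)).1 rfl
      have hEcl : ∀ u ∈ E, f u ∈ E ∧ f u ≠ u ∧ f (f u) = u := by
        intro u hu
        have hu1 := Finset.mem_erase.mp hu
        have hu2 := Finset.mem_erase.mp hu1.2
        obtain ⟨hfu, hneu, hffu⟩ := hD u hu2.2
        refine ⟨Finset.mem_erase.mpr ⟨?_, Finset.mem_erase.mpr ⟨?_, hfu⟩⟩, hneu, hffu⟩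
        · -- f u ≠ f v
          intro h
          apply hu2.1
          rw [← hffu, h, hff]
        · -- f u ≠ v
          intro h
          apply hu1.1
          rw [← hffu, h]
      have heven := ih E hsub hEcl
      have hcd : D.card = E.card + 2 := by omega
      rw [hcd]
      exact Nat.even_add.mpr (iff_of_true heven (by decide))

lemma aux_exists_fpf {α : Type*} [DecidableEq α] (P : Finset α)
    (hP : Even P.card) : ∃ g : α → α, ∀ v ∈ P, g v ∈ P ∧ g v ≠ v ∧ g (g v) = v := by
  classical
  induction P using Finset.strongInduction with
  | _ P ih =>
    rcases P.eq_empty_or_nonempty with rfl | ⟨v, hv⟩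
    · exact ⟨id, by simp⟩
    · have h2 : 1 < P.card := by
        obtain ⟨c, hc⟩ := hP
        have : 1 ≤ P.card := Finset.card_pos.mpr ⟨v, hv⟩
        omega
      obtain ⟨u, hu, hune⟩ := Finset.exists_mem_ne h2 v
      set E := (P.erase v).erase u with hE
      have hu' : u ∈ P.erase v := Finset.mem_erase.mpr ⟨hune, hu⟩
      have h1 : (P.erase v).card = P.card - 1 := Finset.card_erase_of_mem hv
      have h2' : E.card = (P.erase v).card - 1 := Finset.card_erase_of_mem hu'
      have h3 : 1 ≤ (P.erase v).card := Finset.card_pos.mpr ⟨u, hu'⟩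
      have hsub : E ⊂ P := by
        refine Finset.ssubset_iff_of_subset ?_ |>.mpr ⟨v, hv, ?_⟩
        · intro x hx
          exact Finset.mem_of_mem_erase (Finset.mem_of_mem_erase hx)
        · intro hvE
          exact (Finset.mem_erase.mp (Finset.mem_of_mem_erase hvE)).1 rfl
      have hEeven : Even E.card := by
        obtain ⟨c, hc⟩ := hP
        refine ⟨c - 1, by omega⟩
      obtain ⟨g', hg'⟩ := ih E hsub hEeven
      set g : α → α := fun x => if x = v then u else if x = u then v else g' x with hgdef
      have hvu : v ≠ u := fun h => hune h.symm
      have hgv : g v = u := by simp [hgdef]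
      have hgu : g u = v := by simp [hgdef, hune]
      have hgE : ∀ y ∈ E, g y = g' y := by
        intro y hy
        have hy1 := Finset.mem_erase.mp hy
        have hy2 := Finset.mem_erase.mp hy1.2
        simp [hgdef, hy1.1, hy2.1]
      refine ⟨g, ?_⟩
      intro x hx
      by_cases hxv : x = v
      · subst hxv
        rw [hgv, hgu]
        exact ⟨hu, hune, rfl⟩
      · by_cases hxu : x = u
        · subst hxu
          rw [hgu, hgv]
          exact ⟨hv, hvu, rfl⟩
        · have hxE : x ∈ E := Finset.mem_erase.mpr ⟨hxu, Finset.mem_erase.mpr ⟨hxv, hx⟩⟩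
          obtain ⟨hg1, hg2, hg3⟩ := hg' x hxE
          have e1 : g x = g' x := hgE x hxE
          have e2 : g (g' x) = g' (g' x) := hgE _ hg1
          rw [e1, e2, hg3]
          exact ⟨Finset.mem_of_mem_erase (Finset.mem_of_mem_erase hg1), hg2, rfl⟩

lemma aux_walk_cross {V : Type*} [LinearOrder V] (G : SimpleGraph V) (s : V) :
    ∀ {u v : V} (_ : G.Walk u v), u < s → s ≤ v → ∃ x y, G.Adj x y ∧ x < s ∧ s ≤ y := by
  intro u v w
  induction w with
  | nil => intro h1 h2; exact absurd (lt_of_lt_of_le h1 h2) (lt_irrefl _)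
  | @cons u x v h p ih =>
    intro hu hv
    by_cases hx : x < s
    · exact ih hx hv
    · exact ⟨u, x, h, hu, le_of_not_gt hx⟩

/-- Let `G` be a connected interval graph with interval model `I_i = [a i, b i]`
having pairwise distinct endpoints, vertices in left-end ordering, and
`G_i = G[{x | x ≤ i}]`; `v0, v1` denote the first two vertices (`v_1, v_2` in
1-indexed notation). Suppose `r < k < j < i` with `F(v_i) = v_j`, `F(v_j) = v_k`,
`F(v_k) = v_r` (`F` = least-index neighbor), and not every vertex `v_l` with
`k < l < j` is adjacent to a vertex of `{v_j, v_r}`. Let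
`t = max{l : k < l < j, v_l v_j ∉ E}` (assumed to exist) and `F(v_t) = v_b`. Then:
(a) if `L(v_b) = v_0` (every vertex below `v_b` is adjacent to `v_b`), then
`{v_j, v_b}` is a minimum semipaired dominating set of `G_i`;
(b) if `L(v_b) = v_1`, then `{v_1, v_2, v_j, v_b}` is a minimum semipaired
dominating set of `G_i`;
(c) if `L(v_b) = v_s` with `s ≥ 2`, then for every minimum semipaired dominating set
`D_s` of `G_s` the set `D_s ∪ {v_j, v_b}` is a minimum semipaired dominating set of
`G_i`; in particular `γ_pr2(G_i) = γ_pr2(G_s) + 2`. -/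
theorem interval_minSemiPD_cases_jb {n : ℕ} (a b' : Fin n → ℝ)
    (G : SimpleGraph (Fin n))
    (hab : ∀ i, a i < b' i)
    (hbinj : Function.Injective b')
    (habne : ∀ i j : Fin n, a i ≠ b' j)
    (hmono : StrictMono a)
    (hadj : ∀ i j : Fin n, G.Adj i j ↔
      i ≠ j ∧ (Set.Icc (a i) (b' i) ∩ Set.Icc (a j) (b' j)).Nonempty)
    (hconn : G.Connected)
    (v0 v1 : Fin n) (hv0 : (v0 : ℕ) = 0) (hv1 : (v1 : ℕ) = 1)
    (r k j i : Fin n) (hrk : r < k) (hkj : k < j) (hji : j < i)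
    (hFi : G.Adj j i ∧ ∀ x : Fin n, G.Adj x i → j ≤ x)
    (hFj : G.Adj k j ∧ ∀ x : Fin n, G.Adj x j → k ≤ x)
    (hFk : G.Adj r k ∧ ∀ x : Fin n, G.Adj x k → r ≤ x)
    (hncov : ¬ ∀ l : Fin n, k < l → l < j → G.Adj l j ∨ G.Adj l r)
    (t : Fin n) (hkt : k < t) (htj : t < j) (htadj : ¬ G.Adj t j)
    (htmax : ∀ l : Fin n, k < l → l < j → ¬ G.Adj l j → l ≤ t)
    (b : Fin n) (hFt : G.Adj b t ∧ ∀ x : Fin n, G.Adj x t → b ≤ x) :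
    ((∀ x : Fin n, x < b → G.Adj x b) →
      IsMinSemiPDOn G {x : Fin n | x ≤ i} {j, b}) ∧
    ((¬ G.Adj v0 b ∧ ∀ x : Fin n, v0 < x → x < b → G.Adj x b) →
      IsMinSemiPDOn G {x : Fin n | x ≤ i} {v0, v1, j, b}) ∧
    (∀ s : Fin n, v0 < s → s < b → ¬ G.Adj s b →
      (∀ x : Fin n, x < b → ¬ G.Adj x b → x ≤ s) →
      (∀ Ds : Finset (Fin n), IsMinSemiPDOn G {x : Fin n | x ≤ s} Ds →
        IsMinSemiPDOn G {x : Fin n | x ≤ i} (Ds ∪ {j, b})) ∧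
      gammaPr2On G {x : Fin n | x ≤ i} = gammaPr2On G {x : Fin n | x ≤ s} + 2) := by
  classical
  set Si : Set (Fin n) := {x : Fin n | x ≤ i} with hSi
  -- basic adjacency tools
  have adjlt : ∀ {p q : Fin n}, p < q → (G.Adj p q ↔ a q < b' p) := by
    intro p q hpq
    rw [hadj]
    constructor
    · rintro ⟨hne, x, hx⟩
      simp only [Set.mem_inter_iff, Set.mem_Icc] at hx
      exact lt_of_le_of_ne (le_trans hx.2.1 hx.1.2) (habne q p)
    · intro h
      exact ⟨ne_of_lt hpq, a q, by
        simp only [Set.mem_inter_iff, Set.mem_Icc]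
        exact ⟨⟨le_of_lt (hmono hpq), le_of_lt h⟩, ⟨le_refl _, le_of_lt (hab q)⟩⟩⟩
  have adj_of : ∀ {p q : Fin n}, p < q → a q < b' p → G.Adj p q :=
    fun h1 h2 => (adjlt h1).mpr h2
  have nadj : ∀ {p q : Fin n}, p < q → ¬ G.Adj p q → b' p < a q := by
    intro p q hpq h
    have h2 : ¬ (a q < b' p) := fun hh => h ((adjlt hpq).mpr hh)
    exact lt_of_le_of_ne (le_of_not_gt h2) (Ne.symm (habne q p))
  have idxlt : ∀ {p q : Fin n}, a p < a q → p < q := fun h => hmono.lt_iff_lt.mp h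
  have amono : ∀ {p q : Fin n}, p ≤ q → a p ≤ a q := fun h => hmono.monotone h
  -- structural real facts
  have f_ai_bj : a i < b' j := (adjlt hji).mp hFi.1
  have f_aj_bk : a j < b' k := (adjlt hkj).mp hFj.1
  have f_bt_aj : b' t < a j := nadj htj htadj
  have hbk : b ≤ k := hFt.2 k (adj_of hkt (lt_trans (hmono htj) f_aj_bk))
  have hbt : b < t := lt_of_le_of_lt hbk hkt
  have f_at_bb : a t < b' b := (adjlt hbt).mp hFt.1
  have hbj : b < j := lt_of_le_of_lt hbk hkj
  have hjb : j ≠ b := (ne_of_lt hbj).symm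
  have hFt_min : ∀ x, x < b → b' x < a t := by
    intro x hx
    refine nadj (lt_trans hx hbt) (fun hadj' => absurd (hFt.2 x hadj') (not_le.mpr hx))
  have hFi_min : ∀ x, x < j → b' x < a i := by
    intro x hx
    refine nadj (lt_trans hx hji) (fun hadj' => absurd (hFi.2 x hadj') (not_le.mpr hx))
  have hFk_min : ∀ x, x < r → b' x < a k := by
    intro x hx
    refine nadj (lt_trans hx hrk) (fun hadj' => absurd (hFk.2 x hadj') (not_le.mpr hx))
  have f_br_at : b' r < a t := by
    push_neg at hncov
    obtain ⟨l, h1, h2, h3⟩ := hncov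
    have hlt : l ≤ t := htmax l h1 h2 h3.1
    exact lt_of_lt_of_le (nadj (lt_trans hrk h1) (fun hc => h3.2 hc.symm)) (amono hlt)
  have hrb : r < b := by
    rcases lt_trichotomy b r with h | h | h
    · exfalso
      have h1 : b' b < a k := hFk_min b h
      exact absurd (lt_trans f_at_bb h1) (not_lt.mpr (le_of_lt (hmono hkt)))
    · exact absurd (h ▸ f_at_bb) (not_lt.mpr (le_of_lt f_br_at))
    · exact h
  have hbpos : 0 < b.val := lt_of_le_of_lt (Nat.zero_le _) (Fin.lt_def.mp hrb)
  have hj2 : 2 ≤ j.val := by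
    have h1 := Fin.lt_def.mp hrk
    have h2 := Fin.lt_def.mp hkj
    omega
  have hv0le : ∀ x : Fin n, v0 ≤ x := fun x => by rw [Fin.le_def, hv0]; omega
  -- connectivity crossing
  have cross : ∀ s' : Fin n, 0 < s'.val → ∃ z, z < s' ∧ G.Adj z s' := by
    intro s' hs'
    have hv0s : v0 < s' := by rw [Fin.lt_def, hv0]; omega
    obtain ⟨wlk⟩ := hconn.preconnected v0 s'
    obtain ⟨x, y, hxy, hxs, hys⟩ := aux_walk_cross G s' wlk hv0s (le_refl s')
    rcases eq_or_lt_of_le hys with rfl | hlt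
    · exact ⟨x, hxs, hxy⟩
    · exact ⟨x, hxs, adj_of hxs (lt_trans (hmono hlt) ((adjlt (lt_trans hxs hlt)).mp hxy))⟩
  have adj01 : G.Adj v0 v1 := by
    obtain ⟨z, hz, hadj01⟩ := cross v1 (by omega)
    have hzv0 : z = v0 := by
      have := Fin.lt_def.mp hz
      exact Fin.ext (by omega)
    rwa [hzv0] at hadj01
  -- dominator localization
  have dom_t : ∀ d : Fin n, (d = t ∨ G.Adj d t) → b ≤ d ∧ d < j := by
    intro d hd
    rcases hd with rfl | hdadj
    · exact ⟨le_of_lt hbt, htj⟩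
    · refine ⟨hFt.2 d hdadj, ?_⟩
      rcases lt_trichotomy d t with h | h | h
      · exact lt_trans h htj
      · exact absurd (h ▸ hdadj) G.irrefl
      · exact idxlt (lt_trans ((adjlt h).mp hdadj.symm) f_bt_aj)
  have dom_i : ∀ d : Fin n, (d = i ∨ G.Adj d i) → j ≤ d := by
    intro d hd
    rcases hd with rfl | hdadj
    · exact le_of_lt hji
    · exact hFi.2 d hdadj
  -- {j,b} covers everything in [b, i]
  have domcore : ∀ x : Fin n, x ≤ i → b ≤ x → x ≠ j → x ≠ b → (G.Adj j x ∨ G.Adj b x) := by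
    intro x hxi hbx hxj hxb
    rcases le_or_gt x t with hxt | htx
    · right
      exact adj_of (lt_of_le_of_ne hbx (Ne.symm hxb)) (lt_of_le_of_lt (amono hxt) f_at_bb)
    · rcases lt_trichotomy x j with hxj' | h | h
      · left
        by_contra hn
        have hn' : ¬ G.Adj x j := fun hc => hn hc.symm
        exact absurd (htmax x (lt_trans hkt htx) hxj' hn') (not_le.mpr htx)
      · exact absurd h hxj
      · left; exact adj_of h (lt_of_le_of_lt (amono hxi) f_ai_bj)
  -- distance ≤ 2 between j and b, with witness k
  have jbpair : ∀ (S : Set (Fin n)), (k ∈ S) →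
      ((G.Adj j b ∨ ∃ w ∈ S, G.Adj j w ∧ G.Adj b w) ∧
       (G.Adj b j ∨ ∃ w ∈ S, G.Adj b w ∧ G.Adj j w)) := by
    intro S hkS
    rcases eq_or_lt_of_le hbk with rfl | hbk'
    · exact ⟨Or.inl hFj.1.symm, Or.inl hFj.1⟩
    · have h1 : G.Adj b k := adj_of hbk' (lt_trans (hmono hkt) f_at_bb)
      exact ⟨Or.inr ⟨k, hkS, hFj.1.symm, h1⟩, Or.inr ⟨k, hkS, h1, hFj.1.symm⟩⟩
  have hkSi : k ∈ Si := le_of_lt (lt_trans hkj hji)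
  have htSi : t ∈ Si := le_of_lt (lt_trans htj hji)
  have hjSi : j ∈ Si := le_of_lt hji
  have hbSi : b ∈ Si := le_of_lt (lt_trans hbj hji)
  have lower2 : ∀ D' : Finset (Fin n), IsSemiPDOn G Si D' → 2 ≤ D'.card := by
    intro D' hD'
    obtain ⟨hD1, hD2, f', hf'⟩ := hD'
    have hne : D'.Nonempty := by
      by_cases hi : i ∈ D'
      · exact ⟨i, hi⟩
      · obtain ⟨u, hu, _⟩ := hD2 i (show i ∈ Si from le_refl i) hi
        exact ⟨u, hu⟩
    obtain ⟨v, hv⟩ := hne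
    obtain ⟨h1, h2, _, _⟩ := hf' v hv
    exact Finset.one_lt_card.mpr ⟨v, hv, f' v, h1, Ne.symm h2⟩
  refine ⟨?_, ?_, ?_⟩
  · -- part (a)
    intro hall
    refine ⟨⟨?_, ?_, ?_⟩, ?_⟩
    · intro v hv
      rcases Finset.mem_insert.mp hv with rfl | hv2
      · exact hjSi
      · rw [Finset.mem_singleton] at hv2; subst hv2; exact hbSi
    · intro v hvS hvD
      simp only [Finset.mem_insert, Finset.mem_singleton, not_or] at hvD
      rcases lt_or_ge v b with h | h
      · exact ⟨b, by simp, (hall v h).symm⟩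
      · rcases domcore v hvS h hvD.1 hvD.2 with h' | h'
        · exact ⟨j, by simp, h'⟩
        · exact ⟨b, by simp, h'⟩
    · set f : Fin n → Fin n := fun x => if x = j then b else if x = b then j else x with hfdef
      have e1 : f j = b := by simp [hfdef]
      have e2 : f b = j := by simp [hfdef, Ne.symm hjb]
      refine ⟨f, ?_⟩
      intro v hv
      rcases Finset.mem_insert.mp hv with rfl | hv2
      · rw [e1, e2]
        exact ⟨by simp, Ne.symm hjb, rfl, (jbpair Si hkSi).1⟩
      · rw [Finset.mem_singleton] at hv2; subst hv2
        rw [e2, e1]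
        exact ⟨by simp, hjb, rfl, (jbpair Si hkSi).2⟩
    · intro D' hD'
      have hcard : ({j, b} : Finset (Fin n)).card = 2 := by
        rw [Finset.card_insert_of_notMem (by simp [hjb]), Finset.card_singleton]
      rw [hcard]
      exact lower2 D' hD'
  · -- part (b)
    rintro ⟨hb0, hball⟩
    have hbv0 : v0 < b := by rw [Fin.lt_def, hv0]; omega
    have hbne1 : b ≠ v1 := by
      rintro rfl
      exact hb0 adj01
    have hb2 : 2 ≤ b.val := by
      have h1 := Fin.val_ne_of_ne hbne1
      omega
    have hv01 : v0 ≠ v1 := by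
      intro h; rw [h] at hv0; omega
    have hv0j : v0 ≠ j := by intro h; rw [← h, hv0] at hj2; omega
    have hv0b : v0 ≠ b := by intro h; rw [← h, hv0] at hb2; omega
    have hv1j : v1 ≠ j := by intro h; rw [← h, hv1] at hj2; omega
    have hv1b : v1 ≠ b := fun h => hbne1 h.symm
    have hv1Si : v1 ∈ Si := le_of_lt (lt_of_lt_of_le (by rw [Fin.lt_def, hv1]; omega : v1 < b) (le_of_lt (lt_trans hbj hji)))
    have hv0Si : v0 ∈ Si := hv0le i
    refine ⟨⟨?_, ?_, ?_⟩, ?_⟩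
    · intro v hv
      simp only [Finset.mem_insert, Finset.mem_singleton] at hv
      rcases hv with rfl | rfl | rfl | rfl
      exacts [hv0Si, hv1Si, hjSi, hbSi]
    · intro v hvS hvD
      simp only [Finset.mem_insert, Finset.mem_singleton, not_or] at hvD
      obtain ⟨hd0, hd1, hdj, hdb⟩ := hvD
      rcases lt_or_ge v b with h | h
      · have hv0v : v0 < v := lt_of_le_of_ne (hv0le v) (Ne.symm hd0)
        exact ⟨b, by simp, (hball v hv0v h).symm⟩
      · rcases domcore v hvS h hdj hdb with h' | h'
        · exact ⟨j, by simp, h'⟩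
        · exact ⟨b, by simp, h'⟩
    · set f : Fin n → Fin n := fun x =>
        if x = v0 then v1 else if x = v1 then v0 else if x = j then b else if x = b then j else x
        with hfdef
      have e0 : f v0 = v1 := by simp [hfdef]
      have e1 : f v1 = v0 := by simp [hfdef, Ne.symm hv01]
      have ej : f j = b := by simp [hfdef, Ne.symm hv0j, Ne.symm hv1j]
      have eb : f b = j := by simp [hfdef, Ne.symm hv0b, Ne.symm hv1b, Ne.symm hjb]
      refine ⟨f, ?_⟩
      intro v hv
      simp only [Finset.mem_insert, Finset.mem_singleton] at hv
      rcases hv with rfl | rfl | rfl | rfl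
      · rw [e0, e1]
        exact ⟨by simp, Ne.symm hv01, rfl, Or.inl adj01⟩
      · rw [e1, e0]
        exact ⟨by simp, hv01, rfl, Or.inl adj01.symm⟩
      · rw [ej, eb]
        exact ⟨by simp, Ne.symm hjb, rfl, (jbpair Si hkSi).1⟩
      · rw [eb, ej]
        exact ⟨by simp, hjb, rfl, (jbpair Si hkSi).2⟩
    · intro D' hD'
      have hcard : ({v0, v1, j, b} : Finset (Fin n)).card = 4 := by
        rw [Finset.card_insert_of_notMem (by simp [hv01, hv0j, hv0b]),
            Finset.card_insert_of_notMem (by simp [hv1j, hv1b]),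
            Finset.card_insert_of_notMem (by simp [hjb]), Finset.card_singleton]
      rw [hcard]
      obtain ⟨hD1, hD2, f', hf'⟩ := hD'
      -- dominator of v0 lies below b
      have hd1 : ∃ d ∈ D', d < b := by
        by_cases h : v0 ∈ D'
        · exact ⟨v0, h, hbv0⟩
        · obtain ⟨u, hu, huadj⟩ := hD2 v0 hv0Si h
          refine ⟨u, hu, ?_⟩
          by_contra hc
          have hbu : b ≤ u := le_of_not_gt hc
          have hv0u : v0 < u := lt_of_lt_of_le hbv0 hbu
          have h1 : a u < b' v0 := (adjlt hv0u).mp huadj.symm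
          have h2 : b' v0 < a b := nadj hbv0 hb0
          exact absurd h1 (not_lt.mpr (le_trans (le_of_lt h2) (amono hbu)))
      have hd2 : ∃ d ∈ D', b ≤ d ∧ d < j := by
        by_cases h : t ∈ D'
        · exact ⟨t, h, dom_t t (Or.inl rfl)⟩
        · obtain ⟨u, hu, huadj⟩ := hD2 t htSi h
          exact ⟨u, hu, dom_t u (Or.inr huadj)⟩
      have hd3 : ∃ d ∈ D', j ≤ d := by
        by_cases h : i ∈ D'
        · exact ⟨i, h, le_of_lt hji⟩
        · obtain ⟨u, hu, huadj⟩ := hD2 i (show i ∈ Si from le_refl i) h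
          exact ⟨u, hu, dom_i u (Or.inr huadj)⟩
      obtain ⟨d1, hd1m, hd1p⟩ := hd1
      obtain ⟨d2, hd2m, hd2p⟩ := hd2
      obtain ⟨d3, hd3m, hd3p⟩ := hd3
      have h12 : d1 ≠ d2 := ne_of_lt (lt_of_lt_of_le hd1p hd2p.1)
      have h23 : d2 ≠ d3 := ne_of_lt (lt_of_lt_of_le hd2p.2 hd3p)
      have h13 : d1 ≠ d3 := ne_of_lt (lt_of_lt_of_le hd1p (le_trans hbk (le_trans (le_of_lt hkj) hd3p)))
      have hsub : ({d1, d2, d3} : Finset (Fin n)) ⊆ D' := by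
        intro x hx
        simp only [Finset.mem_insert, Finset.mem_singleton] at hx
        rcases hx with rfl | rfl | rfl
        exacts [hd1m, hd2m, hd3m]
      have h3le : 3 ≤ D'.card := by
        have : ({d1, d2, d3} : Finset (Fin n)).card = 3 := by
          rw [Finset.card_insert_of_notMem (by simp [h12, h13]),
              Finset.card_insert_of_notMem (by simp [h23]), Finset.card_singleton]
        calc 3 = ({d1, d2, d3} : Finset (Fin n)).card := this.symm
          _ ≤ D'.card := Finset.card_le_card hsub
      have heven : Even D'.card := by
        refine aux_even_card_fpf f' D' ?_
        intro v hv
        obtain ⟨h1, h2, h3, _⟩ := hf' v hv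
        exact ⟨h1, h2, h3⟩
      obtain ⟨c, hc⟩ := heven
      omega
  · -- part (c)
    intro s hv0s hsb hnsb hsmax
    set Ss : Set (Fin n) := {x : Fin n | x ≤ s} with hSs
    have hspos : 0 < s.val := by
      have := Fin.lt_def.mp hv0s; omega
    have hsb' : b' s < a b := nadj hsb hnsb
    have hst : s < t := lt_trans hsb hbt
    have hsj : s < j := lt_trans hsb hbj
    have hsi : s < i := lt_trans hsj hji
    have hSsSi : ∀ x : Fin n, x ≤ s → x ≤ i := fun x hx => le_trans hx (le_of_lt hsi)
    have hsxb : ∀ x, s < x → x < b → G.Adj x b := by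
      intro x h1 h2
      by_contra hn
      exact absurd (hsmax x h2 hn) (not_le.mpr h1)
    -- the clique K = N[s] ∩ [0,s] and its second neighborhood W
    set Kp : Fin n → Prop := fun x => x ≤ s ∧ (x = s ∨ G.Adj x s) with hKp
    set Wp : Fin n → Prop := fun x => x ≤ s ∧ (Kp x ∨ ∃ y, Kp y ∧ y ≠ s ∧ G.Adj x y) with hWp
    have KpS : Kp s := ⟨le_refl s, Or.inl rfl⟩
    have K_bs : ∀ x, Kp x → x ≠ s → (x < s ∧ a s < b' x) := by
      intro x hx hne
      have hlt : x < s := lt_of_le_of_ne hx.1 hne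
      rcases hx.2 with h | h
      · exact absurd h hne
      · exact ⟨hlt, (adjlt hlt).mp h⟩
    have Kclique : ∀ x y, Kp x → Kp y → x ≠ y → G.Adj x y := by
      intro x y hx hy hne
      rcases eq_or_ne x s with rfl | hxs
      · obtain ⟨h1, h2⟩ := K_bs y hy (Ne.symm hne)
        exact (adj_of h1 h2).symm
      · obtain ⟨hx1, hx2⟩ := K_bs x hx hxs
        rcases eq_or_ne y s with rfl | hys
        · exact adj_of hx1 hx2
        · obtain ⟨hy1, hy2⟩ := K_bs y hy hys
          rcases lt_trichotomy x y with h | h | h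
          · exact adj_of h (lt_trans (hmono hy1) hx2)
          · exact absurd h hne
          · exact (adj_of h (lt_trans (hmono hx1) hy2)).symm
    have F1 : ∀ x d, x ≤ s → s < d → G.Adj x d → (Kp x ∧ d < t) := by
      intro x d h1 h2 h3
      have hxd : x < d := lt_of_le_of_lt h1 h2
      have ha : a d < b' x := (adjlt hxd).mp h3
      have hdt : d < t := idxlt (lt_trans ha (hFt_min x (lt_of_le_of_lt h1 hsb)))
      refine ⟨⟨h1, ?_⟩, hdt⟩
      rcases eq_or_lt_of_le h1 with rfl | hxs
      · exact Or.inl rfl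
      · exact Or.inr (adj_of hxs (lt_trans (hmono h2) ha))
    -- W is a distance-two clique in G_s
    have Wnot : ∀ x, Wp x → ¬ Kp x → x < s ∧ b' x < a s ∧
        ∃ y, Kp y ∧ y ≠ s ∧ G.Adj x y := by
      intro x hx hnK
      have hxs : x ≠ s := fun h => hnK (h ▸ KpS)
      have hxlt : x < s := lt_of_le_of_ne hx.1 hxs
      have hnadj : ¬ G.Adj x s := fun h => hnK ⟨hx.1, Or.inr h⟩
      refine ⟨hxlt, nadj hxlt hnadj, ?_⟩
      rcases hx.2 with h | h
      · exact absurd h hnK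
      · exact h
    have Wlem : ∀ x y, Wp x → Wp y → x ≠ y →
        (G.Adj x y ∨ ∃ w, w ≤ s ∧ G.Adj x w ∧ G.Adj y w) := by
      intro x y hx hy hne
      by_cases hKx : Kp x
      · by_cases hKy : Kp y
        · exact Or.inl (Kclique x y hKx hKy hne)
        · obtain ⟨hylt, hby, yy, hKyy, hyys, hAyyy⟩ := Wnot y hy hKy
          rcases eq_or_ne x yy with rfl | hne2
          · exact Or.inl hAyyy.symm
          · exact Or.inr ⟨yy, hKyy.1, Kclique x yy hKx hKyy hne2, hAyyy⟩
      · by_cases hKy : Kp y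
        · obtain ⟨hxlt, hbx, yx, hKyx, hyxs, hAxyx⟩ := Wnot x hx hKx
          rcases eq_or_ne y yx with rfl | hne2
          · exact Or.inl hAxyx
          · exact Or.inr ⟨yx, hKyx.1, hAxyx, Kclique y yx hKy hKyx hne2⟩
        · obtain ⟨hxlt, hbx, yx, hKyx, hyxs, hAxyx⟩ := Wnot x hx hKx
          obtain ⟨hylt, hby, yy, hKyy, hyys, hAyyy⟩ := Wnot y hy hKy
          by_cases hAxy : G.Adj x y
          · exact Or.inl hAxy
          · obtain ⟨hyxlt, hbyx⟩ := K_bs yx hKyx hyxs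
            obtain ⟨hyylt, hbyy⟩ := K_bs yy hKyy hyys
            rcases lt_trichotomy x y with hxy | heq | hyx
            · -- x < y, not adjacent, use yx as witness
              have hbxy : b' x < a y := nadj hxy hAxy
              have hyxy : yx < y := by
                rcases lt_trichotomy yx y with h | h | h
                · exact h
                · exact absurd (h ▸ hAxyx) hAxy
                · exfalso
                  rcases lt_trichotomy x yx with h2 | h2 | h2
                  · have := (adjlt h2).mp hAxyx
                    exact absurd (lt_trans this hbxy) (not_lt.mpr (le_of_lt (hmono h)))
                  · exact absurd (h2 ▸ hAxyx) (G.irrefl)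
                  · exact absurd (lt_trans h2 hxy) (not_lt.mpr (le_of_lt h))
              have hAyxy : G.Adj yx y := adj_of hyxy (lt_trans (hmono hylt) hbyx)
              exact Or.inr ⟨yx, le_of_lt hyxlt, hAxyx, hAyxy.symm⟩
            · exact absurd heq hne
            · -- y < x, use yy as witness
              have hbyx2 : b' y < a x := nadj hyx (fun h => hAxy h.symm)
              have hyyx : yy < x := by
                rcases lt_trichotomy yy x with h | h | h
                · exact h
                · exact absurd (h ▸ hAyyy).symm hAxy
                · exfalso
                  rcases lt_trichotomy y yy with h2 | h2 | h2
                  · have := (adjlt h2).mp hAyyy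
                    exact absurd (lt_trans this hbyx2) (not_lt.mpr (le_of_lt (hmono h)))
                  · exact absurd (h2 ▸ hAyyy) (G.irrefl)
                  · exact absurd (lt_trans h2 hyx) (not_lt.mpr (le_of_lt h))
              have hAyyx : G.Adj yy x := adj_of hyyx (lt_trans (hmono hxlt) hbyy)
              exact Or.inr ⟨yy, le_of_lt hyylt, hAyyx.symm, hAyyy⟩
    -- membership in W from a distance-two connection upward
    have pair_W : ∀ p q, p ≤ s → s < q →
        (G.Adj p q ∨ ∃ w ∈ Si, G.Adj p w ∧ G.Adj q w) → Wp p := by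
      intro p q hp hq hdist
      rcases hdist with hA | ⟨y, hySi, hApy, hAqy⟩
      · exact ⟨hp, Or.inl (F1 p q hp hq hA).1⟩
      · rcases le_or_gt y s with hys | hys
        · have hKy : Kp y := (F1 y q hys hq hAqy.symm).1
          rcases eq_or_ne y s with rfl | hyne
          · exact ⟨hp, Or.inl ⟨hp, Or.inr hApy⟩⟩
          · exact ⟨hp, Or.inr ⟨y, hKy, hyne, hApy⟩⟩
        · exact ⟨hp, Or.inl (F1 p y hp hys hApy).1⟩
    -- lowering distance-two witnesses into G_s
    have pair_low : ∀ p q, p ≤ s → q ≤ s → p ≠ q →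
        (G.Adj p q ∨ ∃ w ∈ Si, G.Adj p w ∧ G.Adj q w) →
        (G.Adj p q ∨ ∃ w ∈ Ss, G.Adj p w ∧ G.Adj q w) := by
      intro p q hp hq hne hd
      rcases hd with hA | ⟨y, hy, h1, h2⟩
      · exact Or.inl hA
      · rcases le_or_gt y s with hys | hys
        · exact Or.inr ⟨y, hys, h1, h2⟩
        · exact Or.inl (Kclique p q (F1 p y hp hys h1).1 (F1 q y hq hys h2).1 hne)
    -- THE EXTRACTION LEMMA: from any semi-PD set of G_i produce one of G_s
    -- with two fewer elements
    have extract : ∀ D : Finset (Fin n), IsSemiPDOn G Si D →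
        ∃ E : Finset (Fin n), IsSemiPDOn G Ss E ∧ E.card + 2 ≤ D.card := by
      intro D hD
      obtain ⟨hD1, hD2, f, hf⟩ := hD
      set A := D.filter (fun x => x ≤ s) with hA
      set B := D.filter (fun x => s < x) with hB
      have hAmem : ∀ x, x ∈ A ↔ x ∈ D ∧ x ≤ s := by
        intro x; rw [hA, Finset.mem_filter]
      have hBmem : ∀ x, x ∈ B ↔ x ∈ D ∧ s < x := by
        intro x; rw [hB, Finset.mem_filter]
      have hABcard : A.card + B.card = D.card := by
        have hBeq : B = D.filter (fun x => ¬ x ≤ s) := by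
          rw [hB]; apply Finset.filter_congr; intro x _; simp [not_le]
        rw [hA, hBeq]
        exact Finset.card_filter_add_card_filter_not (p := fun x => x ≤ s)
      -- the two mandatory high vertices
      have hu : ∃ u ∈ B, b ≤ u ∧ u < j := by
        by_cases h : t ∈ D
        · exact ⟨t, (hBmem t).mpr ⟨h, hst⟩, dom_t t (Or.inl rfl)⟩
        · obtain ⟨u, huD, huadj⟩ := hD2 t htSi h
          have hdt := dom_t u (Or.inr huadj)
          exact ⟨u, (hBmem u).mpr ⟨huD, lt_of_lt_of_le hsb hdt.1⟩, hdt⟩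
      have hw : ∃ w ∈ B, j ≤ w := by
        by_cases h : i ∈ D
        · exact ⟨i, (hBmem i).mpr ⟨h, hsi⟩, le_of_lt hji⟩
        · obtain ⟨w, hwD, hwadj⟩ := hD2 i (show i ∈ Si from le_refl i) h
          exact ⟨w, (hBmem w).mpr ⟨hwD, lt_of_lt_of_le hsj (dom_i w (Or.inr hwadj))⟩,
            dom_i w (Or.inr hwadj)⟩
      obtain ⟨u, huB, hub, huj⟩ := hu
      obtain ⟨w, hwB, hjw⟩ := hw
      have huw : u ≠ w := ne_of_lt (lt_of_lt_of_le huj hjw)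
      have hB2 : 2 ≤ B.card := Finset.one_lt_card.mpr ⟨u, huB, w, hwB, huw⟩
      -- cross vertices and internal vertices of A
      set C := A.filter (fun p => s < f p) with hC
      have hCmem : ∀ p, p ∈ C ↔ p ∈ D ∧ p ≤ s ∧ s < f p := by
        intro p; rw [hC, Finset.mem_filter, hAmem]; tauto
      have hCA : C ⊆ A := Finset.filter_subset _ _
      -- parity bookkeeping
      set CB := B.filter (fun v => f v ≤ s) with hCB
      have hCBmem : ∀ v, v ∈ CB ↔ v ∈ D ∧ s < v ∧ f v ≤ s := by
        intro v; rw [hCB, Finset.mem_filter, hBmem]; tauto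
      have hCBcard : C.card = CB.card := by
        apply Finset.card_bij (fun p _ => f p)
        · intro p hp
          obtain ⟨h1, h2, h3⟩ := (hCmem p).mp hp
          obtain ⟨hfD, hfne, hff, _⟩ := hf p h1
          exact (hCBmem (f p)).mpr ⟨hfD, h3, le_of_eq_of_le hff h2⟩
        · intro p1 hp1 p2 hp2 heq
          obtain ⟨h1, _, _⟩ := (hCmem p1).mp hp1
          obtain ⟨h2, _, _⟩ := (hCmem p2).mp hp2
          have e1 := (hf p1 h1).2.2.1
          have e2 := (hf p2 h2).2.2.1
          rw [← e1, ← e2, heq]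
        · intro v hv
          obtain ⟨h1, h2, h3⟩ := (hCBmem v).mp hv
          obtain ⟨hfD, hfne, hff, _⟩ := hf v h1
          refine ⟨f v, (hCmem (f v)).mpr ⟨hfD, h3, ?_⟩, hff⟩
          rw [hff]; exact h2
      set Bint := B.filter (fun v => s < f v) with hBint
      have hBsplit : CB.card + Bint.card = B.card := by
        have hBinteq : Bint = B.filter (fun v => ¬ f v ≤ s) := by
          rw [hBint]; apply Finset.filter_congr; intro x _; simp [not_le]
        rw [hCB, hBinteq]
        exact Finset.card_filter_add_card_filter_not (p := fun v => f v ≤ s)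
      have hBintEven : Even Bint.card := by
        apply aux_even_card_fpf f
        intro v hv
        rw [hBint, Finset.mem_filter, hBmem] at hv
        obtain ⟨⟨hvD, hsv⟩, hsfv⟩ := hv
        obtain ⟨hfD, hfne, hff, _⟩ := hf v hvD
        refine ⟨?_, hfne, hff⟩
        rw [hBint, Finset.mem_filter, hBmem]
        exact ⟨⟨hfD, hsfv⟩, by rw [hff]; exact hsv⟩
      -- every cross vertex is in W
      have hCW : ∀ p ∈ C, Wp p := by
        intro p hp
        obtain ⟨h1, h2, h3⟩ := (hCmem p).mp hp
        obtain ⟨hfD, hfne, hff, hdist⟩ := hf p h1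
        exact pair_W p (f p) h2 h3 hdist
      -- internal structure of A
      have hfA : ∀ p ∈ A, p ∉ C → p ∈ D ∧ f p ∈ A ∧ f p ∉ C := by
        intro p hpA hpC
        obtain ⟨hpD, hps⟩ := (hAmem p).mp hpA
        have hfps : f p ≤ s := by
          by_contra hcon
          exact hpC ((hCmem p).mpr ⟨hpD, hps, not_le.mp hcon⟩)
        obtain ⟨hfD, hfne, hff, _⟩ := hf p hpD
        refine ⟨hpD, (hAmem (f p)).mpr ⟨hfD, hfps⟩, ?_⟩
        intro hcon
        obtain ⟨_, _, hcon3⟩ := (hCmem (f p)).mp hcon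
        rw [hff] at hcon3
        exact absurd hps (not_le.mpr hcon3)
      -- a vertex of [0,s] not dominated by A is in K
      have needy_mem : ∀ x, x ≤ s → x ∉ A → (∀ d ∈ A, ¬ G.Adj d x) → Kp x := by
        intro x h1 h2 h3
        have hxD : x ∉ D := fun h => h2 ((hAmem x).mpr ⟨h, h1⟩)
        obtain ⟨d, hdD, hdAdj⟩ := hD2 x (hSsSi x h1) hxD
        have hsd : s < d := by
          by_contra hcon
          exact h3 d ((hAmem d).mpr ⟨hdD, le_of_not_gt hcon⟩) hdAdj
        exact (F1 x d h1 hsd hdAdj.symm).1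
      -- the generic assembler
      have assemble : ∀ (E P : Finset (Fin n)), (∀ v ∈ E, v ≤ s) → P ⊆ E →
          (∀ p ∈ P, Wp p) → Even P.card →
          (∀ v ∈ E, v ∉ P → v ∈ D ∧ f v ∈ E ∧ f v ∉ P) →
          (∀ x : Fin n, x ≤ s → x ∉ E → ∃ d ∈ E, G.Adj d x) →
          IsSemiPDOn G Ss E := by
        intro E P hEs hPE hPW hPev hkeep hdom
        obtain ⟨g, hg⟩ := aux_exists_fpf P hPev
        refine ⟨fun v hv => hEs v hv, fun x hx hxE => hdom x hx hxE, ?_⟩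
        refine ⟨fun x => if x ∈ P then g x else f x, ?_⟩
        intro v hvE
        by_cases hvP : v ∈ P
        · obtain ⟨hg1, hg2, hg3⟩ := hg v hvP
          simp only [if_pos hvP, if_pos hg1]
          refine ⟨hPE hg1, hg2, hg3, ?_⟩
          rcases Wlem v (g v) (hPW v hvP) (hPW _ hg1) (Ne.symm hg2) with h | ⟨w', hw1, hw2, hw3⟩
          · exact Or.inl h
          · exact Or.inr ⟨w', hw1, hw2, hw3⟩
        · obtain ⟨hvD, hfE, hfP⟩ := hkeep v hvE hvP
          simp only [if_neg hvP, if_neg hfP]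
          obtain ⟨h1, h2, h3, h4⟩ := hf v hvD
          exact ⟨hfE, h2, h3, pair_low v (f v) (hEs v hvE) (hEs _ hfE) (Ne.symm h2) h4⟩
      by_cases hpar : Even C.card
      · by_cases hneed : ∃ x, x ≤ s ∧ x ∉ A ∧ ∀ d ∈ A, ¬ G.Adj d x
        · -- needy case: K ∩ A = ∅, B.card ≥ 4, take E = A ∪ {s, κ₀}
          obtain ⟨x₀, hx₀1, hx₀2, hx₀3⟩ := hneed
          have hKx₀ : Kp x₀ := needy_mem x₀ hx₀1 hx₀2 hx₀3
          have hKAe : ∀ κ, Kp κ → κ ∉ A := by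
            intro κ hκ hκA
            rcases eq_or_ne κ x₀ with rfl | hne
            · exact hx₀2 hκA
            · exact hx₀3 κ hκA (Kclique κ x₀ hκ hKx₀ hne)
          have hsA : s ∉ A := hKAe s KpS
          obtain ⟨κ₀, hκ₀lt, hκ₀adj⟩ := cross s hspos
          have hκ₀K : Kp κ₀ := ⟨le_of_lt hκ₀lt, Or.inr hκ₀adj⟩
          have hκ₀A : κ₀ ∉ A := hKAe κ₀ hκ₀K
          have hκ₀s : κ₀ ≠ s := ne_of_lt hκ₀lt
          have hBne2 : B.card ≠ 2 := by
            intro hB2eq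
            have hBeq : B = {u, w} := by
              have hsub : ({u, w} : Finset (Fin n)) ⊆ B := by
                intro x hx
                rcases Finset.mem_insert.mp hx with h | hx2
                · subst h; exact huB
                · rw [Finset.mem_singleton] at hx2; subst hx2; exact hwB
              have hle : B.card ≤ ({u, w} : Finset (Fin n)).card := by
                rw [Finset.card_insert_of_notMem (by simp [huw]), Finset.card_singleton, hB2eq]
              exact (Finset.eq_of_subset_of_card_le hsub hle).symm
            have hsD : s ∉ D := fun h => hsA ((hAmem s).mpr ⟨h, le_refl s⟩)
            obtain ⟨e, heD, heAdj⟩ := hD2 s (hSsSi s (le_refl s)) hsD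
            by_cases hese : e ≤ s
            · exact hKAe e ⟨hese, Or.inr heAdj⟩ ((hAmem e).mpr ⟨heD, hese⟩)
            · have heB : e ∈ B := (hBmem e).mpr ⟨heD, not_le.mp hese⟩
              rw [hBeq] at heB
              have hbe : b ≤ e := by
                rcases Finset.mem_insert.mp heB with rfl | h
                · exact hub
                · rw [Finset.mem_singleton] at h; subst h
                  exact le_trans hbk (le_trans (le_of_lt hkj) hjw)
              have h1 : a e < b' s := (adjlt (not_le.mp hese)).mp heAdj.symm
              exact absurd h1 (not_lt.mpr (le_trans (le_of_lt hsb') (amono hbe)))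
          have hB4 : 4 ≤ B.card := by
            obtain ⟨cbi, hcbi⟩ := hBintEven
            obtain ⟨cc, hcc⟩ := hpar
            omega
          have hdisjA : Disjoint A ({s, κ₀} : Finset (Fin n)) := by
            rw [Finset.disjoint_left]
            intro p hpA hpm
            rcases Finset.mem_insert.mp hpm with rfl | h
            · exact hsA hpA
            · rw [Finset.mem_singleton] at h; subst h; exact hκ₀A hpA
          have hdisjC : Disjoint C ({s, κ₀} : Finset (Fin n)) :=
            Finset.disjoint_of_subset_left hCA hdisjA
          have hc2 : ({s, κ₀} : Finset (Fin n)).card = 2 := by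
            rw [Finset.card_insert_of_notMem (by simp [Ne.symm hκ₀s]), Finset.card_singleton]
          refine ⟨A ∪ {s, κ₀}, assemble (A ∪ {s, κ₀}) (C ∪ {s, κ₀}) ?_ ?_ ?_ ?_ ?_ ?_, ?_⟩
          · intro v hv
            rcases Finset.mem_union.mp hv with h | h
            · exact ((hAmem v).mp h).2
            · rcases Finset.mem_insert.mp h with h2 | h2
              · exact le_of_eq h2
              · rw [Finset.mem_singleton] at h2; subst h2; exact le_of_lt hκ₀lt
          · exact Finset.union_subset_union hCA (Finset.Subset.refl _)
          · intro p hp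
            rcases Finset.mem_union.mp hp with h | h
            · exact hCW p h
            · rcases Finset.mem_insert.mp h with h2 | h2
              · subst h2; exact ⟨le_refl _, Or.inl KpS⟩
              · rw [Finset.mem_singleton] at h2; subst h2
                exact ⟨le_of_lt hκ₀lt, Or.inl hκ₀K⟩
          · rw [Finset.card_union_of_disjoint hdisjC, hc2]
            obtain ⟨cc, hcc⟩ := hpar
            exact ⟨cc + 1, by omega⟩
          · intro v hvE hvP
            have hvA : v ∈ A := by
              rcases Finset.mem_union.mp hvE with h | h
              · exact h
              · exact absurd (Finset.mem_union_right _ h) hvP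
            have hvC : v ∉ C := fun h => hvP (Finset.mem_union_left _ h)
            obtain ⟨hvD, hfA', hfC⟩ := hfA v hvA hvC
            refine ⟨hvD, Finset.mem_union_left _ hfA', ?_⟩
            intro hcon
            rcases Finset.mem_union.mp hcon with h | h
            · exact hfC h
            · rcases Finset.mem_insert.mp h with h2 | h2
              · exact hsA (h2 ▸ hfA')
              · rw [Finset.mem_singleton] at h2; exact hκ₀A (h2 ▸ hfA')
          · intro x hx hxE
            have hxs' : x ≠ s := fun h =>
              hxE (h ▸ Finset.mem_union_right _ (Finset.mem_insert_self _ _))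
            have hxA : x ∉ A := fun h => hxE (Finset.mem_union_left _ h)
            by_cases hdomx : ∃ d ∈ A, G.Adj d x
            · obtain ⟨d, h1, h2⟩ := hdomx
              exact ⟨d, Finset.mem_union_left _ h1, h2⟩
            · push_neg at hdomx
              have hKx : Kp x := needy_mem x hx hxA hdomx
              exact ⟨s, Finset.mem_union_right _ (Finset.mem_insert_self _ _),
                (Kclique x s hKx KpS hxs').symm⟩
          · rw [Finset.card_union_of_disjoint hdisjA, hc2]
            omega
        · -- no needy vertex: E = A works
          push_neg at hneed
          refine ⟨A, assemble A C ?_ hCA hCW hpar ?_ ?_, ?_⟩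
          · intro v hv; exact ((hAmem v).mp hv).2
          · intro v hvE hvP; exact hfA v hvE hvP
          · intro x hx hxA; exact hneed x hx hxA
          · omega
      · -- C has odd cardinality
        have hB3 : 3 ≤ B.card := by
          obtain ⟨cbi, hcbi⟩ := hBintEven
          rw [Nat.not_even_iff] at hpar
          omega
        by_cases hKsub : ∃ κ, Kp κ ∧ κ ∉ A
        · obtain ⟨κ, hκK, hκA⟩ := hKsub
          have hdisjA : Disjoint A ({κ} : Finset (Fin n)) := by
            rw [Finset.disjoint_left]
            intro p hpA hpm
            rw [Finset.mem_singleton] at hpm; subst hpm; exact hκA hpA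
          have hdisjC : Disjoint C ({κ} : Finset (Fin n)) :=
            Finset.disjoint_of_subset_left hCA hdisjA
          refine ⟨A ∪ {κ}, assemble (A ∪ {κ}) (C ∪ {κ}) ?_ ?_ ?_ ?_ ?_ ?_, ?_⟩
          · intro v hv
            rcases Finset.mem_union.mp hv with h | h
            · exact ((hAmem v).mp h).2
            · rw [Finset.mem_singleton] at h; subst h; exact hκK.1
          · exact Finset.union_subset_union hCA (Finset.Subset.refl _)
          · intro p hp
            rcases Finset.mem_union.mp hp with h | h
            · exact hCW p h
            · rw [Finset.mem_singleton] at h; subst h; exact ⟨hκK.1, Or.inl hκK⟩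
          · rw [Finset.card_union_of_disjoint hdisjC, Finset.card_singleton]
            exact Nat.even_add_one.mpr hpar
          · intro v hvE hvP
            have hvA : v ∈ A := by
              rcases Finset.mem_union.mp hvE with h | h
              · exact h
              · exact absurd (Finset.mem_union_right _ h) hvP
            have hvC : v ∉ C := fun h => hvP (Finset.mem_union_left _ h)
            obtain ⟨hvD, hfA', hfC⟩ := hfA v hvA hvC
            refine ⟨hvD, Finset.mem_union_left _ hfA', ?_⟩
            intro hcon
            rcases Finset.mem_union.mp hcon with h | h
            · exact hfC h
            · rw [Finset.mem_singleton] at h; exact hκA (h ▸ hfA')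
          · intro x hx hxE
            have hxκ : x ≠ κ := fun h =>
              hxE (h ▸ Finset.mem_union_right _ (Finset.mem_singleton_self _))
            have hxA : x ∉ A := fun h => hxE (Finset.mem_union_left _ h)
            by_cases hdomx : ∃ d ∈ A, G.Adj d x
            · obtain ⟨d, h1, h2⟩ := hdomx
              exact ⟨d, Finset.mem_union_left _ h1, h2⟩
            · push_neg at hdomx
              have hKx : Kp x := needy_mem x hx hxA hdomx
              exact ⟨κ, Finset.mem_union_right _ (Finset.mem_singleton_self _),
                Kclique κ x hκK hKx (Ne.symm hxκ)⟩
          · rw [Finset.card_union_of_disjoint hdisjA, Finset.card_singleton]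
            omega
        · -- K ⊆ A : remove s
          push_neg at hKsub
          have hsA : s ∈ A := hKsub s KpS
          have hsD : s ∈ D := ((hAmem s).mp hsA).1
          obtain ⟨κ₀, hκ₀lt, hκ₀adj⟩ := cross s hspos
          have hκ₀K : Kp κ₀ := ⟨le_of_lt hκ₀lt, Or.inr hκ₀adj⟩
          have hκ₀A : κ₀ ∈ A := hKsub κ₀ hκ₀K
          have hκ₀s : κ₀ ≠ s := ne_of_lt hκ₀lt
          have domE : ∀ x : Fin n, x ≤ s → x ∉ A.erase s → ∃ d ∈ A.erase s, G.Adj d x := by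
            intro x hx hxE
            rcases eq_or_ne x s with rfl | hxs
            · exact ⟨κ₀, Finset.mem_erase.mpr ⟨hκ₀s, hκ₀A⟩, hκ₀adj⟩
            · have hxA : x ∉ A := fun h => hxE (Finset.mem_erase.mpr ⟨hxs, h⟩)
              by_cases hdomx : ∃ d ∈ A, G.Adj d x
              · obtain ⟨d, h1, h2⟩ := hdomx
                have hds : d ≠ s := by
                  rintro rfl
                  exact hxA (hKsub x ⟨hx, Or.inr h2.symm⟩)
                exact ⟨d, Finset.mem_erase.mpr ⟨hds, h1⟩, h2⟩
              · push_neg at hdomx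
                exact absurd (hKsub x (needy_mem x hx hxA hdomx)) hxA
          have hmemE : ∀ v ∈ A.erase s, v ≤ s :=
            fun v hv => ((hAmem v).mp (Finset.mem_of_mem_erase hv)).2
          have hcardE : (A.erase s).card + 1 = A.card := by
            rw [Finset.card_erase_of_mem hsA]
            have : 1 ≤ A.card := Finset.card_pos.mpr ⟨s, hsA⟩
            omega
          by_cases hsC : s ∈ C
          · refine ⟨A.erase s, assemble _ (C.erase s) hmemE ?_ ?_ ?_ ?_ domE, ?_⟩
            · intro p hp
              obtain ⟨h1, h2⟩ := Finset.mem_erase.mp hp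
              exact Finset.mem_erase.mpr ⟨h1, hCA h2⟩
            · intro p hp; exact hCW p (Finset.mem_of_mem_erase hp)
            · rw [Finset.card_erase_of_mem hsC, Nat.even_iff]
              rw [Nat.not_even_iff] at hpar
              have : 1 ≤ C.card := Finset.card_pos.mpr ⟨s, hsC⟩
              omega
            · intro v hvE hvP
              obtain ⟨hvs, hvA⟩ := Finset.mem_erase.mp hvE
              have hvC : v ∉ C := fun h => hvP (Finset.mem_erase.mpr ⟨hvs, h⟩)
              obtain ⟨hvD, hfA', hfC⟩ := hfA v hvA hvC
              have hfs : f v ≠ s := by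
                intro hcon
                obtain ⟨_, _, hsfs⟩ := (hCmem s).mp hsC
                obtain ⟨_, _, hff, _⟩ := hf v hvD
                have hvfs : v = f s := by rw [← hcon, hff]
                exact absurd (((hAmem v).mp hvA).2) (not_le.mpr (hvfs ▸ hsfs))
              exact ⟨hvD, Finset.mem_erase.mpr ⟨hfs, hfA'⟩,
                fun h => hfC (Finset.mem_of_mem_erase h)⟩
            · omega
          · -- s internally paired with σ = f s
            obtain ⟨hσD, hσne, hσff, hσdist⟩ := hf s hsD
            have hσle : f s ≤ s := by
              by_contra hcon
              exact hsC ((hCmem s).mpr ⟨hsD, le_refl s, not_le.mp hcon⟩)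
            have hσA : f s ∈ A := (hAmem _).mpr ⟨hσD, hσle⟩
            have hσC : f s ∉ C := by
              intro h
              obtain ⟨_, _, h3⟩ := (hCmem _).mp h
              rw [hσff] at h3
              exact absurd h3 (lt_irrefl s)
            have hσW : Wp (f s) := by
              rcases hσdist with hA' | ⟨y, hy, h1, h2⟩
              · exact ⟨hσle, Or.inl ⟨hσle, Or.inr hA'.symm⟩⟩
              · rcases lt_trichotomy y s with hys | rfl | hys
                · exact ⟨hσle, Or.inr ⟨y, ⟨le_of_lt hys, Or.inr h1.symm⟩, ne_of_lt hys, h2⟩⟩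
                · exact absurd h1 (G.irrefl)
                · exact ⟨hσle, Or.inl (F1 (f s) y hσle hys h2).1⟩
            have hσE : f s ∈ A.erase s := Finset.mem_erase.mpr ⟨hσne, hσA⟩
            have hdisjσ : Disjoint C ({f s} : Finset (Fin n)) := by
              rw [Finset.disjoint_left]
              intro p hpC hpm
              rw [Finset.mem_singleton] at hpm; subst hpm; exact hσC hpC
            refine ⟨A.erase s, assemble _ (C ∪ {f s}) hmemE ?_ ?_ ?_ ?_ domE, ?_⟩
            · intro p hp
              rcases Finset.mem_union.mp hp with h | h
              · refine Finset.mem_erase.mpr ⟨?_, hCA h⟩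
                rintro rfl; exact hsC h
              · rw [Finset.mem_singleton] at h; subst h; exact hσE
            · intro p hp
              rcases Finset.mem_union.mp hp with h | h
              · exact hCW p h
              · rw [Finset.mem_singleton] at h; subst h; exact hσW
            · rw [Finset.card_union_of_disjoint hdisjσ, Finset.card_singleton]
              exact Nat.even_add_one.mpr hpar
            · intro v hvE hvP
              obtain ⟨hvs, hvA⟩ := Finset.mem_erase.mp hvE
              have hvC : v ∉ C := fun h => hvP (Finset.mem_union_left _ h)
              have hvσ : v ≠ f s := fun h =>
                hvP (Finset.mem_union_right _ (h ▸ Finset.mem_singleton_self _))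
              obtain ⟨hvD, hfA', hfC⟩ := hfA v hvA hvC
              obtain ⟨_, _, hff, _⟩ := hf v hvD
              have hfvs : f v ≠ s := by
                intro hcon
                apply hvσ
                rw [← hcon, hff]
              have hfvσ : f v ≠ f s := by
                intro hcon
                apply hvs
                have := congrArg f hcon
                rw [hff, hσff] at this
                exact this
              refine ⟨hvD, Finset.mem_erase.mpr ⟨hfvs, hfA'⟩, ?_⟩
              intro hcon
              rcases Finset.mem_union.mp hcon with h | h
              · exact hfC h
              · rw [Finset.mem_singleton] at h; exact hfvσ h
            · omega
    -- existence of a semi-PD set on every nontrivial prefix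
    have exists_pd : ∀ N : ℕ, ∀ m : Fin n, m.val ≤ N → 0 < m.val →
        ∃ E : Finset (Fin n), IsSemiPDOn G {x : Fin n | x ≤ m} E := by
      intro N
      induction N with
      | zero => intro m h1 h2; omega
      | succ N ih =>
        intro m h1 h2
        obtain ⟨z, hz, hzadj⟩ := cross m h2
        have hzm : z ≠ m := ne_of_lt hz
        by_cases hm1 : m.val = 1
        · refine ⟨{z, m}, ⟨?_, ?_, ?_⟩⟩
          · intro v hv
            rcases Finset.mem_insert.mp hv with h | h
            · show v ≤ m; rw [h]; exact le_of_lt hz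
            · rw [Finset.mem_singleton] at h; show v ≤ m; rw [h]
          · intro x hx hxE
            exfalso
            have hxm : x.val ≤ m.val := Fin.le_def.mp hx
            have hzv : z.val = 0 := by have := Fin.lt_def.mp hz; omega
            apply hxE
            rcases Nat.lt_or_ge x.val 1 with h | h
            · have hxz : x = z := Fin.ext (by omega)
              rw [hxz]; exact Finset.mem_insert_self _ _
            · have hxm' : x = m := Fin.ext (by omega)
              rw [hxm']; exact Finset.mem_insert_of_mem (Finset.mem_singleton_self _)
          · set F : Fin n → Fin n := fun x => if x = z then m else if x = m then z else x
              with hF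
            have eFz : F z = m := by rw [hF]; simp
            have eFm : F m = z := by rw [hF]; simp [Ne.symm hzm]
            refine ⟨F, ?_⟩
            intro v hv
            rcases Finset.mem_insert.mp hv with h | h
            · subst h
              rw [eFz, eFm]
              exact ⟨Finset.mem_insert_of_mem (Finset.mem_singleton_self _), Ne.symm hzm,
                rfl, Or.inl hzadj⟩
            · rw [Finset.mem_singleton] at h; subst h
              rw [eFm, eFz]
              exact ⟨Finset.mem_insert_self _ _, hzm, rfl, Or.inl hzadj.symm⟩
        · -- m.val ≥ 2
          have hmn : m.val - 1 < n := by have := m.isLt; omega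
          set m' : Fin n := ⟨m.val - 1, hmn⟩ with hm'
          have hm'v : m'.val = m.val - 1 := rfl
          have h2' : 0 < m'.val := by omega
          obtain ⟨E', hE'⟩ := ih m' (by omega) h2'
          obtain ⟨hE1, hE2, f', hf'⟩ := hE'
          have hlem : ∀ x : Fin n, x ≤ m' ↔ x < m := by
            intro x
            rw [Fin.le_def, Fin.lt_def, hm'v]
            omega
          have hE'le : ∀ v ∈ E', v < m := fun v hv => (hlem v).mp (hE1 v hv)
          have hmE : m ∉ E' := fun h => absurd (hE'le m h) (lt_irrefl m)
          by_cases hcov : ∃ z', z' < m ∧ G.Adj z' m ∧ z' ∉ E'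
          · obtain ⟨z', hz'1, hz'2, hz'3⟩ := hcov
            have hz'm : z' ≠ m := ne_of_lt hz'1
            refine ⟨E' ∪ {z', m}, ⟨?_, ?_, ?_⟩⟩
            · intro v hv
              rcases Finset.mem_union.mp hv with h | h
              · show v ≤ m; exact le_of_lt (hE'le v h)
              · rcases Finset.mem_insert.mp h with h2 | h2
                · show v ≤ m; rw [h2]; exact le_of_lt hz'1
                · rw [Finset.mem_singleton] at h2; show v ≤ m; rw [h2]
            · intro x hx hxE
              have hxm : x ≤ m := hx
              rcases eq_or_lt_of_le hxm with h | hlt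
              · exfalso
                apply hxE
                rw [h]
                exact Finset.mem_union_right _
                  (Finset.mem_insert_of_mem (Finset.mem_singleton_self _))
              · have hxE' : x ∉ E' := fun h => hxE (Finset.mem_union_left _ h)
                obtain ⟨u', hu', hadj'⟩ := hE2 x ((hlem x).mpr hlt) hxE'
                exact ⟨u', Finset.mem_union_left _ hu', hadj'⟩
            · set F : Fin n → Fin n := fun x => if x = z' then m else if x = m then z' else f' x
                with hF
              have eFz : F z' = m := by rw [hF]; simp
              have eFm : F m = z' := by rw [hF]; simp [Ne.symm hz'm]
              have eFo : ∀ x, x ≠ z' → x ≠ m → F x = f' x := by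
                intro x h1 h2; rw [hF]; simp [h1, h2]
              refine ⟨F, ?_⟩
              intro v hv
              rcases Finset.mem_union.mp hv with hvE' | hvzm
              · have hvz : v ≠ z' := fun h => hz'3 (h ▸ hvE')
                have hvm : v ≠ m := fun h => hmE (h ▸ hvE')
                obtain ⟨h1, h2, h3, h4⟩ := hf' v hvE'
                have hfz : f' v ≠ z' := fun h => hz'3 (h ▸ h1)
                have hfm : f' v ≠ m := fun h => hmE (h ▸ h1)
                rw [eFo v hvz hvm, eFo _ hfz hfm]
                refine ⟨Finset.mem_union_left _ h1, h2, h3, ?_⟩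
                rcases h4 with h | ⟨w', hw', ha, hb⟩
                · exact Or.inl h
                · exact Or.inr ⟨w', le_of_lt ((hlem w').mp hw'), ha, hb⟩
              · rcases Finset.mem_insert.mp hvzm with h2 | h2
                · subst h2
                  rw [eFz, eFm]
                  exact ⟨Finset.mem_union_right _
                    (Finset.mem_insert_of_mem (Finset.mem_singleton_self _)),
                    Ne.symm hz'm, rfl, Or.inl hz'2⟩
                · rw [Finset.mem_singleton] at h2; subst h2
                  rw [eFm, eFz]
                  exact ⟨Finset.mem_union_right _ (Finset.mem_insert_self _ _),
                    hz'm, rfl, Or.inl hz'2.symm⟩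
          · push_neg at hcov
            refine ⟨E', ⟨?_, ?_, ?_⟩⟩
            · intro v hv; show v ≤ m; exact le_of_lt (hE'le v hv)
            · intro x hx hxE
              rcases eq_or_lt_of_le (show x ≤ m from hx) with h | hlt
              · subst h
                exact ⟨z, hcov z hz hzadj, hzadj⟩
              · exact hE2 x ((hlem x).mpr hlt) hxE
            · refine ⟨f', ?_⟩
              intro v hv
              obtain ⟨h1, h2, h3, h4⟩ := hf' v hv
              refine ⟨h1, h2, h3, ?_⟩
              rcases h4 with h | ⟨w', hw', ha, hb⟩
              · exact Or.inl h
              · exact Or.inr ⟨w', le_of_lt ((hlem w').mp hw'), ha, hb⟩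
    -- the first conclusion of part (c)
    have main1 : ∀ Ds : Finset (Fin n), IsMinSemiPDOn G Ss Ds →
        IsMinSemiPDOn G Si (Ds ∪ {j, b}) := by
      intro Ds hDs
      obtain ⟨⟨hDs1, hDs2, fs, hfs⟩, hDsmin⟩ := hDs
      have hDsle : ∀ v ∈ Ds, v ≤ s := fun v hv => hDs1 v hv
      have hjD : j ∉ Ds := fun h => absurd (hDsle j h) (not_le.mpr hsj)
      have hbD : b ∉ Ds := fun h => absurd (hDsle b h) (not_le.mpr hsb)
      have hdisj : Disjoint Ds ({j, b} : Finset (Fin n)) := by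
        rw [Finset.disjoint_left]
        intro p hp hpm
        rcases Finset.mem_insert.mp hpm with h | h
        · exact hjD (h ▸ hp)
        · rw [Finset.mem_singleton] at h; exact hbD (h ▸ hp)
      have hcardU : (Ds ∪ {j, b}).card = Ds.card + 2 := by
        rw [Finset.card_union_of_disjoint hdisj,
          Finset.card_insert_of_notMem (by simp [hjb]), Finset.card_singleton]
      constructor
      · refine ⟨?_, ?_, ?_⟩
        · intro v hv
          rcases Finset.mem_union.mp hv with h | h
          · exact hSsSi v (hDsle v h)
          · rcases Finset.mem_insert.mp h with h2 | h2
            · exact h2 ▸ hjSi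
            · rw [Finset.mem_singleton] at h2; exact h2 ▸ hbSi
        · intro x hx hxD
          have hxj : x ≠ j := fun h =>
            hxD (h ▸ Finset.mem_union_right _ (Finset.mem_insert_self _ _))
          have hxb : x ≠ b := fun h =>
            hxD (h ▸ Finset.mem_union_right _
              (Finset.mem_insert_of_mem (Finset.mem_singleton_self _)))
          have hxDs : x ∉ Ds := fun h => hxD (Finset.mem_union_left _ h)
          rcases le_or_gt x s with hxs | hsx
          · obtain ⟨u', hu', ha⟩ := hDs2 x hxs hxDs
            exact ⟨u', Finset.mem_union_left _ hu', ha⟩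
          · rcases lt_or_ge x b with hxb' | hbx
            · exact ⟨b, Finset.mem_union_right _
                (Finset.mem_insert_of_mem (Finset.mem_singleton_self _)),
                (hsxb x hsx hxb').symm⟩
            · rcases domcore x hx hbx hxj hxb with h | h
              · exact ⟨j, Finset.mem_union_right _ (Finset.mem_insert_self _ _), h⟩
              · exact ⟨b, Finset.mem_union_right _
                  (Finset.mem_insert_of_mem (Finset.mem_singleton_self _)), h⟩
        · set F : Fin n → Fin n := fun x => if x = j then b else if x = b then j else fs x
            with hF
          have eFj : F j = b := by rw [hF]; simp
          have eFb : F b = j := by rw [hF]; simp [Ne.symm hjb]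
          have eFo : ∀ x, x ≠ j → x ≠ b → F x = fs x := by
            intro x h1 h2; rw [hF]; simp [h1, h2]
          refine ⟨F, ?_⟩
          intro v hv
          rcases Finset.mem_union.mp hv with hvDs | hvjb
          · have hvj : v ≠ j := fun h => hjD (h ▸ hvDs)
            have hvb : v ≠ b := fun h => hbD (h ▸ hvDs)
            obtain ⟨h1, h2, h3, h4⟩ := hfs v hvDs
            have hfj : fs v ≠ j := fun h => hjD (h ▸ h1)
            have hfb : fs v ≠ b := fun h => hbD (h ▸ h1)
            rw [eFo v hvj hvb, eFo _ hfj hfb]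
            refine ⟨Finset.mem_union_left _ h1, h2, h3, ?_⟩
            rcases h4 with h | ⟨w', hw', ha, hb'⟩
            · exact Or.inl h
            · exact Or.inr ⟨w', hSsSi w' hw', ha, hb'⟩
          · rcases Finset.mem_insert.mp hvjb with h2 | h2
            · subst h2
              rw [eFj, eFb]
              exact ⟨Finset.mem_union_right _
                (Finset.mem_insert_of_mem (Finset.mem_singleton_self _)),
                Ne.symm hjb, rfl, (jbpair Si hkSi).1⟩
            · rw [Finset.mem_singleton] at h2; subst h2
              rw [eFb, eFj]
              exact ⟨Finset.mem_union_right _ (Finset.mem_insert_self _ _),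
                hjb, rfl, (jbpair Si hkSi).2⟩
      · intro D' hD'
        obtain ⟨E, hE, hEc⟩ := extract D' hD'
        have := hDsmin E hE
        rw [hcardU]
        omega
    refine ⟨main1, ?_⟩
    -- the gamma equation
    obtain ⟨E0, hE0⟩ := exists_pd s.val s (le_refl _) hspos
    have hne_s : {c | ∃ D, IsSemiPDOn G Ss D ∧ D.card = c}.Nonempty := ⟨E0.card, E0, hE0, rfl⟩
    obtain ⟨Dm, hDm, hDmc⟩ := Nat.sInf_mem hne_s
    have hDmMin : IsMinSemiPDOn G Ss Dm := by
      refine ⟨hDm, fun D' hD' => ?_⟩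
      rw [hDmc]
      exact Nat.sInf_le ⟨D', hD', rfl⟩
    have hres := main1 Dm hDmMin
    have hjDm : j ∉ Dm := fun h => absurd (hDm.1 j h) (not_le.mpr hsj)
    have hbDm : b ∉ Dm := fun h => absurd (hDm.1 b h) (not_le.mpr hsb)
    have hdisj : Disjoint Dm ({j, b} : Finset (Fin n)) := by
      rw [Finset.disjoint_left]
      intro p hp hpm
      rcases Finset.mem_insert.mp hpm with h | h
      · exact hjDm (h ▸ hp)
      · rw [Finset.mem_singleton] at h; exact hbDm (h ▸ hp)
    have hcardU : (Dm ∪ {j, b}).card = Dm.card + 2 := by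
      rw [Finset.card_union_of_disjoint hdisj,
        Finset.card_insert_of_notMem (by simp [hjb]), Finset.card_singleton]
    have hne_i : {c | ∃ D, IsSemiPDOn G Si D ∧ D.card = c}.Nonempty :=
      ⟨(Dm ∪ {j, b}).card, Dm ∪ {j, b}, hres.1, rfl⟩
    have hle : gammaPr2On G Si ≤ Dm.card + 2 := by
      unfold gammaPr2On
      exact Nat.sInf_le ⟨Dm ∪ {j, b}, hres.1, hcardU⟩
    have hge : Dm.card + 2 ≤ gammaPr2On G Si := by
      obtain ⟨Di, hDi, hDic⟩ := Nat.sInf_mem hne_i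
      have h1 := hres.2 Di hDi
      rw [hcardU] at h1
      unfold gammaPr2On
      rw [← hDic]
      exact h1
    have hγs : gammaPr2On G Ss = Dm.card := by
      unfold gammaPr2On
      exact hDmc.symm
    omega
end
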